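/- arXiv:1111.7107 — 4 statements merged into one kernel-verified Lean document; each statement's English description precedes it below -/
import Mathlib

section
/- Let C be a nonempty bounded closed convex subset of a uniformly convex Banach space E and let T : C → C be an asymptotically nonexpansive mapping. Then the fixed point set F(T) = {x ∈ C : Tx = x} is a nonempty, closed and convex subset of C. -/
open Filter Set Topology

lemma midpoint_closed_convex' {E : Type*} [NormedAddCommGroup E] [NormedSpace ℝ E]
    {S : Set E} (hS : IsClosed S)
    (hmid : ∀ u ∈ S, ∀ v ∈ S, midpoint ℝ u v ∈ S) : Convex ℝ S := by
  intro u hu v hv a b ha hb hab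
  set f : ℝ → E := fun t => u + t • (v - u) with hf
  have hcomb : a • u + b • v = f b := by
    have h1 : a = 1 - b := by linarith
    simp only [hf, h1]; module
  rw [hcomb]
  have hb1 : b ≤ 1 := by linarith
  have hfmid : ∀ s t : ℝ, midpoint ℝ (f s) (f t) = f ((s + t) / 2) := by
    intro s t
    rw [midpoint_eq_smul_add, invOf_eq_inv]
    simp only [hf]
    module
  have key : ∀ n : ℕ, ∀ i : ℕ, i ≤ 2 ^ n → f ((i : ℝ) / 2 ^ n) ∈ S := by
    intro n
    induction n with
    | zero =>
      intro i hi
      interval_cases i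
      · simpa [hf] using hu
      · have : f (((1:ℕ) : ℝ) / 2 ^ 0) = v := by simp [hf]
        rw [this]; exact hv
    | succ n ih =>
      intro i hi
      have hp : (2:ℕ) ^ (n + 1) = 2 * 2 ^ n := by ring
      have h1 : i / 2 ≤ 2 ^ n := by omega
      have h2 : i - i / 2 ≤ 2 ^ n := by omega
      have hsum : i / 2 + (i - i / 2) = i := by omega
      have h3 : (i : ℝ) / 2 ^ (n + 1) =
          (((i / 2 : ℕ) : ℝ) / 2 ^ n + ((i - i / 2 : ℕ) : ℝ) / 2 ^ n) / 2 := by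
        rw [← add_div, ← Nat.cast_add, hsum]
        rw [pow_succ]
        field_simp
      rw [h3, ← hfmid]
      exact hmid _ (ih _ h1) _ (ih _ h2)
  have hfc : Continuous f := by fun_prop
  have htend : Tendsto (fun n : ℕ => ((⌊b * 2 ^ n⌋₊ : ℝ) / 2 ^ n)) atTop (𝓝 b) := by
    rw [tendsto_iff_dist_tendsto_zero]
    apply squeeze_zero (fun n => dist_nonneg) (g := fun n : ℕ => (1/2 : ℝ) ^ n)
    · intro n
      have hpow : (0:ℝ) < 2 ^ n := by positivity
      have hfl : b * 2 ^ n - 1 < (⌊b * 2 ^ n⌋₊ : ℝ) := Nat.sub_one_lt_floor _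
      have hfl2 : (⌊b * 2 ^ n⌋₊ : ℝ) ≤ b * 2 ^ n := Nat.floor_le (by positivity)
      have heq : (⌊b * 2 ^ n⌋₊ : ℝ) / 2 ^ n - b = ((⌊b * 2 ^ n⌋₊ : ℝ) - b * 2 ^ n) / 2 ^ n := by
        field_simp
      rw [Real.dist_eq, heq, abs_div, abs_of_pos hpow, div_pow, one_pow]
      gcongr
      rw [abs_le]
      constructor <;> linarith
    · exact tendsto_pow_atTop_nhds_zero_of_lt_one (by norm_num) (by norm_num)
  have := (hfc.continuousAt (x := b)).tendsto.comp htend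
  refine hS.mem_of_tendsto this (Eventually.of_forall fun n => key n _ ?_)
  calc ⌊b * 2 ^ n⌋₊ ≤ ⌊(2:ℝ) ^ n⌋₊ := Nat.floor_le_floor (by nlinarith [pow_pos (show (0:ℝ)<2 by norm_num) n])
    _ = 2 ^ n := by
        rw [show ((2:ℝ) ^ n) = ((2 ^ n : ℕ) : ℝ) by push_cast; ring, Nat.floor_natCast]

set_option maxHeartbeats 2000000 in
/-- **(Goebel–Kirk).** Let `C` be a nonempty bounded closed convex subset of a
uniformly convex Banach space `E` and let `T : C → C` be an asymptotically
nonexpansive mapping. Then the fixed point set `F(T) = {x ∈ C : T x = x}` is a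
nonempty, closed and convex subset of `C`. -/
theorem fixedPointSet_nonempty_closed_convex
    (E : Type*) [NormedAddCommGroup E] [NormedSpace ℝ E] [CompleteSpace E]
    [UniformConvexSpace E]
    (C : Set E) (hCne : C.Nonempty) (hCb : Bornology.IsBounded C)
    (hCcl : IsClosed C) (hCcv : Convex ℝ C)
    (T : E → E) (hTmaps : Set.MapsTo T C C)
    (k : ℕ → ℝ) (hk : ∀ n, 1 ≤ n → 1 ≤ k n)
    (hklim : Filter.Tendsto k Filter.atTop (nhds 1))
    (hTan : ∀ n, 1 ≤ n → ∀ y ∈ C, ∀ z ∈ C,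
      ‖T^[n] y - T^[n] z‖ ≤ k n * ‖y - z‖) :
    {z ∈ C | T z = z}.Nonempty ∧ IsClosed {z ∈ C | T z = z} ∧
      Convex ℝ {z ∈ C | T z = z} ∧ {z ∈ C | T z = z} ⊆ C := by
  obtain ⟨x0, hx0C⟩ := hCne
  obtain ⟨M, hM⟩ : ∃ M : ℝ, ∀ y ∈ C, ∀ z ∈ C, ‖y - z‖ ≤ M := by
    obtain ⟨R, hR⟩ := hCb.subset_closedBall 0
    refine ⟨R + R, fun y hy z hz => ?_⟩
    have h1 : ‖y‖ ≤ R := by simpa [dist_zero_right] using hR hy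
    have h2 : ‖z‖ ≤ R := by simpa [dist_zero_right] using hR hz
    calc ‖y - z‖ ≤ ‖y‖ + ‖z‖ := norm_sub_le _ _
      _ ≤ R + R := add_le_add h1 h2
  have hmapsn : ∀ n, Set.MapsTo T^[n] C C := fun n => hTmaps.iterate n
  have hTcont : ∀ (c : ℕ → E) (z : E), z ∈ C → (∀ n, c n ∈ C) →
      Tendsto c atTop (𝓝 z) → Tendsto (fun n => T (c n)) atTop (𝓝 (T z)) := by
    intro c z hzC hcC hc
    rw [tendsto_iff_dist_tendsto_zero] at hc ⊢
    refine squeeze_zero (fun n => dist_nonneg) (fun n => ?_)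
      (by simpa using hc.const_mul (k 1))
    have h := hTan 1 le_rfl (c n) (hcC n) z hzC
    simpa [dist_eq_norm] using h
  have hfix : ∀ w ∈ C, Tendsto (fun n => T^[n] w) atTop (𝓝 w) → T w = w := by
    intro w hwC hconv
    have h1 : Tendsto (fun n : ℕ => T^[n+1] w) atTop (𝓝 w) :=
      hconv.comp (tendsto_add_atTop_nat 1)
    have h2 : Tendsto (fun n => T (T^[n] w)) atTop (𝓝 (T w)) :=
      hTcont _ w hwC (fun n => hmapsn n hwC) hconv
    have h3 : (fun n : ℕ => T^[n+1] w) = fun n => T (T^[n] w) :=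
      funext fun n => Function.iterate_succ_apply' T n w
    rw [h3] at h1
    exact tendsto_nhds_unique h2 h1
  -- closedness
  have hSclosed : IsClosed {z ∈ C | T z = z} := by
    refine IsSeqClosed.isClosed ?_
    intro s p hs hsp
    have hsC : ∀ n, s n ∈ C := fun n => (hs n).1
    have hpC : p ∈ C := hCcl.mem_of_tendsto hsp (Eventually.of_forall hsC)
    have h1 : Tendsto (fun n => T (s n)) atTop (𝓝 (T p)) := hTcont s p hpC hsC hsp
    have h2 : (fun n => T (s n)) = s := funext fun n => (hs n).2
    rw [h2] at h1
    exact ⟨hpC, tendsto_nhds_unique h1 hsp⟩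
  -- PART 1 : nonemptiness via asymptotic centers
  have hnonempty : {z ∈ C | T z = z}.Nonempty := by
    set x : ℕ → E := fun n => T^[n] x0 with hxdef
    have hxC : ∀ n, x n ∈ C := fun n => hmapsn n hx0C
    set r : E → ℝ := fun w => limsup (fun n => ‖x n - w‖) atTop with hrdef
    have hbddU : ∀ w ∈ C, IsBoundedUnder (· ≤ ·) atTop (fun n => ‖x n - w‖) :=
      fun w hw => isBoundedUnder_of ⟨M, fun n => hM _ (hxC n) _ hw⟩
    have hcob : ∀ w : E, IsCoboundedUnder (· ≤ ·) atTop (fun n => ‖x n - w‖) :=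
      fun w => (isBoundedUnder_of (r := (· ≥ ·)) ⟨0, fun n => norm_nonneg _⟩).isCoboundedUnder_le
    have hrnn : ∀ w ∈ C, 0 ≤ r w := fun w hw =>
      le_limsup_of_frequently_le (Frequently.of_forall fun n => norm_nonneg _) (hbddU w hw)
    set r0 := sInf (r '' C) with hr0def
    have hne : (r '' C).Nonempty := ⟨r x0, ⟨x0, hx0C, rfl⟩⟩
    have hbb : BddBelow (r '' C) := ⟨0, by rintro _ ⟨w, hw, rfl⟩; exact hrnn w hw⟩
    have hr0lb : ∀ w ∈ C, r0 ≤ r w := fun w hw => csInf_le hbb ⟨w, hw, rfl⟩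
    have hr0nn : 0 ≤ r0 := le_csInf hne (by rintro _ ⟨w, hw, rfl⟩; exact hrnn w hw)
    -- Lemma A : uniform minimality
    have lemA : ∀ ε : ℝ, 0 < ε → ∃ δ : ℝ, 0 < δ ∧ ∀ u ∈ C, ∀ v ∈ C,
        r u ≤ r0 + δ → r v ≤ r0 + δ → ‖u - v‖ ≤ ε := by
      intro ε hε
      rcases le_or_gt r0 (ε / 8) with hsmall | hbig
      · refine ⟨ε / 8, by positivity, fun p hp q hq hrp hrq => ?_⟩
        refine le_of_forall_pos_le_add fun η hη => ?_
        have hev1 : ∀ᶠ n in atTop, ‖x n - p‖ < r0 + ε/8 + η/2 := by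
          refine eventually_lt_of_limsup_lt ?_ (hbddU p hp)
          simp only [hrdef] at hrp ⊢; linarith
        have hev2 : ∀ᶠ n in atTop, ‖x n - q‖ < r0 + ε/8 + η/2 := by
          refine eventually_lt_of_limsup_lt ?_ (hbddU q hq)
          simp only [hrdef] at hrq ⊢; linarith
        obtain ⟨n, h1, h2⟩ := (hev1.and hev2).exists
        calc ‖p - q‖ = ‖(p - x n) + (x n - q)‖ := by rw [sub_add_sub_cancel]
          _ ≤ ‖p - x n‖ + ‖x n - q‖ := norm_add_le _ _
          _ = ‖x n - p‖ + ‖x n - q‖ := by rw [norm_sub_rev]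
          _ ≤ ε + η := by linarith
      · have hr0pos : 0 < r0 := lt_trans (by positivity) hbig
        obtain ⟨δ₁, hδ₁, hUC⟩ :=
          exists_forall_closed_ball_dist_add_le_two_mul_sub E (half_pos hε) r0
        refine ⟨min (r0/2) (δ₁/8), lt_min (by positivity) (by positivity),
          fun p hp q hq hrp hrq => ?_⟩
        set δ := min (r0/2) (δ₁/8) with hδdef
        have hδpos : 0 < δ := lt_min (by positivity) (by positivity)
        have hδr0 : δ ≤ r0/2 := min_le_left _ _
        have hδδ₁ : δ ≤ δ₁/8 := min_le_right _ _
        by_contra hcon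
        push_neg at hcon
        have hmC : midpoint ℝ p q ∈ C := by
          have h := hCcv hp hq (by norm_num : (0:ℝ) ≤ 1/2)
            (by norm_num : (0:ℝ) ≤ 1/2) (by norm_num)
          have he : midpoint ℝ p q = (1/2:ℝ) • p + (1/2:ℝ) • q := by
            rw [midpoint_eq_smul_add, invOf_eq_inv]; module
          rw [he]; exact h
        set R := r0 + 2*δ with hRdef
        have hRpos : 0 < R := by positivity
        set c : ℝ := r0 / R with hcdef
        have hc0 : 0 ≤ c := le_of_lt (div_pos hr0pos hRpos)
        have hchalf : 1/2 ≤ c := by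
          rw [hcdef, le_div_iff₀ hRpos]; rw [hRdef]; linarith
        have hcR : c * R = r0 := div_mul_cancel₀ _ hRpos.ne'
        have hevp : ∀ᶠ n in atTop, ‖x n - p‖ < R := by
          refine eventually_lt_of_limsup_lt ?_ (hbddU p hp)
          simp only [hrdef] at hrp ⊢; rw [hRdef]; linarith
        have hevq : ∀ᶠ n in atTop, ‖x n - q‖ < R := by
          refine eventually_lt_of_limsup_lt ?_ (hbddU q hq)
          simp only [hrdef] at hrq ⊢; rw [hRdef]; linarith
        have hkey : r (midpoint ℝ p q) ≤ r0 + 2*δ - δ₁/2 := by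
          simp only [hrdef]
          refine limsup_le_of_le (hcob _) ?_
          filter_upwards [hevp, hevq] with n h1 h2
          have ha : ‖c • (x n - p)‖ ≤ r0 := by
            rw [norm_smul, Real.norm_of_nonneg hc0]
            calc c * ‖x n - p‖ ≤ c * R := mul_le_mul_of_nonneg_left h1.le hc0
              _ = r0 := hcR
          have hb : ‖c • (x n - q)‖ ≤ r0 := by
            rw [norm_smul, Real.norm_of_nonneg hc0]
            calc c * ‖x n - q‖ ≤ c * R := mul_le_mul_of_nonneg_left h2.le hc0
              _ = r0 := hcR
          have hab : ε/2 ≤ ‖c • (x n - p) - c • (x n - q)‖ := by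
            rw [← smul_sub]
            have he : (x n - p) - (x n - q) = q - p := by abel
            rw [he, norm_smul, Real.norm_of_nonneg hc0, norm_sub_rev]
            nlinarith [hcon, norm_nonneg (p - q)]
          have h3 := hUC ha hb hab
          have hsum : c • (x n - p) + c • (x n - q)
              = (2*c) • (x n - midpoint ℝ p q) := by
            rw [midpoint_eq_smul_add, invOf_eq_inv]; module
          rw [hsum, norm_smul, Real.norm_of_nonneg (by positivity : (0:ℝ) ≤ 2*c)] at h3
          set Y := ‖x n - midpoint ℝ p q‖ with hYdef
          have hY0 : 0 ≤ Y := norm_nonneg _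
          have h4 : 2 * r0 * Y ≤ (2*r0 - δ₁) * R := by
            calc 2 * r0 * Y = (2 * c * Y) * R := by rw [← hcR]; ring
              _ ≤ (2*r0 - δ₁) * R := mul_le_mul_of_nonneg_right h3 hRpos.le
          nlinarith [h4, hr0pos, hδpos, hδ₁, mul_nonneg hδ₁.le hδpos.le]
        have hge := hr0lb _ hmC
        linarith
    -- minimizing sequence, Cauchy, limit z
    have hminseq : ∀ j : ℕ, ∃ u ∈ C, r u < r0 + 1/(j+1) := by
      intro j
      have hlt : r0 < r0 + 1/(j+1) := by
        have : (0:ℝ) < 1/(j+1) := by positivity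
        linarith
      obtain ⟨y, hy, hylt⟩ := exists_lt_of_csInf_lt hne hlt
      obtain ⟨w, hw, rfl⟩ := hy
      exact ⟨w, hw, hylt⟩
    choose u huC hru using hminseq
    have hone_div : ∀ δ : ℝ, 0 < δ → ∃ J : ℕ, ∀ j ≥ J, 1/((j:ℝ)+1) ≤ δ := by
      intro δ hδ
      obtain ⟨J, hJ⟩ := exists_nat_gt (1/δ)
      refine ⟨J, fun j hj => ?_⟩
      rw [div_le_iff₀ (by positivity)]
      rw [div_lt_iff₀ hδ] at hJ
      have : (J:ℝ) ≤ (j:ℝ) := by exact_mod_cast hj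
      nlinarith
    have hcauchy : CauchySeq u := by
      rw [Metric.cauchySeq_iff]
      intro ε hε
      obtain ⟨δ, hδ, hA⟩ := lemA (ε/2) (half_pos hε)
      obtain ⟨J, hJ⟩ := hone_div δ hδ
      refine ⟨J, fun m hm n hn => ?_⟩
      rw [dist_eq_norm]
      have h1 : r (u m) ≤ r0 + δ := (hru m).le.trans (by linarith [hJ m hm])
      have h2 : r (u n) ≤ r0 + δ := (hru n).le.trans (by linarith [hJ n hn])
      calc ‖u m - u n‖ ≤ ε/2 := hA _ (huC m) _ (huC n) h1 h2
        _ < ε := half_lt_self hε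
    obtain ⟨z, hz⟩ := cauchySeq_tendsto_of_complete hcauchy
    have hzC : z ∈ C := hCcl.mem_of_tendsto hz (Eventually.of_forall huC)
    -- r is 1-Lipschitz-ish
    have hrlip : ∀ a : E, ∀ b ∈ C, r a ≤ r b + ‖a - b‖ := by
      intro a b hb
      refine le_of_forall_pos_le_add fun η hη => ?_
      have hev : ∀ᶠ n in atTop, ‖x n - b‖ < r b + η := by
        refine eventually_lt_of_limsup_lt ?_ (hbddU b hb)
        simp only [hrdef] at *
        linarith
      simp only [hrdef]
      refine limsup_le_of_le (hcob a) ?_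
      filter_upwards [hev] with n hn
      calc ‖x n - a‖ = ‖(x n - b) + (b - a)‖ := by rw [sub_add_sub_cancel]
        _ ≤ ‖x n - b‖ + ‖b - a‖ := norm_add_le _ _
        _ ≤ r b + ‖a - b‖ + η := by rw [norm_sub_rev b a]; linarith
    have hrz : r z = r0 := by
      refine le_antisymm ?_ (hr0lb z hzC)
      refine le_of_forall_pos_le_add fun η hη => ?_
      obtain ⟨J, hJ⟩ := hone_div (η/2) (half_pos hη)
      have hev2 : ∀ᶠ j in atTop, ‖z - u j‖ < η/2 := by
        have := (tendsto_iff_dist_tendsto_zero).1 hz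
        have h := Metric.tendsto_atTop.1 hz (η/2) (half_pos hη)
        obtain ⟨N, hN⟩ := h
        rw [eventually_atTop]
        exact ⟨N, fun j hj => by rw [norm_sub_rev, ← dist_eq_norm]; exact hN j hj⟩
      obtain ⟨j, hj1, hj2⟩ := ((eventually_atTop.2 ⟨J, hJ⟩).and hev2).exists
      calc r z ≤ r (u j) + ‖z - u j‖ := hrlip z (u j) (huC j)
        _ ≤ r0 + 1/((j:ℝ)+1) + η/2 := by linarith [(hru j).le]
        _ ≤ r0 + η := by linarith
    -- iterates of z approach minimality
    have hrTm : ∀ m : ℕ, 1 ≤ m → r (T^[m] z) ≤ k m * r0 := by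
      intro m hm
      have hkm : (1:ℝ) ≤ k m := hk m hm
      have hkm0 : (0:ℝ) < k m := lt_of_lt_of_le one_pos hkm
      refine le_of_forall_pos_le_add fun η hη => ?_
      have hev : ∀ᶠ n in atTop, ‖x n - z‖ < r0 + η/(k m) := by
        refine eventually_lt_of_limsup_lt ?_ (hbddU z hzC)
        have : limsup (fun n => ‖x n - z‖) atTop = r0 := by
          simp only [hrdef] at hrz; exact hrz
        rw [this]
        have : (0:ℝ) < η / k m := by positivity
        linarith
      obtain ⟨N, hN⟩ := eventually_atTop.1 hev
      simp only [hrdef]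
      refine limsup_le_of_le (hcob _) ?_
      rw [eventually_atTop]
      refine ⟨N + m, fun n hn => ?_⟩
      have hxsplit : x n = T^[m] (x (n - m)) := by
        simp only [hxdef, ← Function.iterate_add_apply]
        congr 1
        omega
      rw [hxsplit]
      calc ‖T^[m] (x (n-m)) - T^[m] z‖ ≤ k m * ‖x (n-m) - z‖ :=
            hTan m hm _ (hxC _) _ hzC
        _ ≤ k m * (r0 + η/(k m)) := by
            have := (hN (n-m) (by omega)).le
            gcongr
        _ = k m * r0 + η := by field_simp
    have hconv : Tendsto (fun m => T^[m] z) atTop (𝓝 z) := by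
      rw [Metric.tendsto_atTop]
      intro ε hε
      obtain ⟨δ, hδ, hA⟩ := lemA (ε/2) (half_pos hε)
      have htendkr : Tendsto (fun m => k m * r0) atTop (𝓝 r0) := by
        simpa using hklim.mul_const r0
      have hev : ∀ᶠ m in atTop, k m * r0 < r0 + δ :=
        htendkr.eventually_lt_const (by linarith)
      obtain ⟨N, hN⟩ := eventually_atTop.1 (hev.and (eventually_ge_atTop 1))
      refine ⟨N + 1, fun m hm => ?_⟩
      rw [dist_eq_norm]
      have h1 : r (T^[m] z) ≤ r0 + δ :=
        (hrTm m (by omega)).trans (hN m (by omega)).1.le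
      have h2 : r z ≤ r0 + δ := by rw [hrz]; linarith
      calc ‖T^[m] z - z‖ ≤ ε/2 := hA _ (hmapsn m hzC) _ hzC h1 h2
        _ < ε := half_lt_self hε
    exact ⟨z, hzC, hfix z hzC hconv⟩
  -- PART 3 : convexity
  have hSconv : Convex ℝ {z ∈ C | T z = z} := by
    refine midpoint_closed_convex' hSclosed ?_
    rintro p ⟨hpC, hp⟩ q ⟨hqC, hq⟩
    rcases eq_or_ne p q with rfl | hpq
    · rw [midpoint_self]; exact ⟨hpC, hp⟩
    have hmid2 : midpoint ℝ p q = (2⁻¹:ℝ) • (p + q) := by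
      rw [midpoint_eq_smul_add, invOf_eq_inv]
    have hwC : midpoint ℝ p q ∈ C := by
      have h := hCcv hpC hqC (by norm_num : (0:ℝ) ≤ 1/2)
        (by norm_num : (0:ℝ) ≤ 1/2) (by norm_num)
      have he : midpoint ℝ p q = (1/2:ℝ) • p + (1/2:ℝ) • q := by
        rw [hmid2]; module
      rw [he]; exact h
    set w := midpoint ℝ p q with hwdef
    refine ⟨hwC, hfix w hwC ?_⟩
    set d := ‖p - q‖ with hddef
    have hd : 0 < d := norm_pos_iff.2 (sub_ne_zero.2 hpq)
    have hpw : ‖p - w‖ = d / 2 := by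
      have he : p - w = (2⁻¹:ℝ) • (p - q) := by rw [hmid2]; module
      rw [he, norm_smul, hddef]
      norm_num
      ring
    have hwq : ‖w - q‖ = d / 2 := by
      have he : w - q = (2⁻¹:ℝ) • (p - q) := by rw [hmid2]; module
      rw [he, norm_smul, hddef]
      norm_num
      ring
    rw [Metric.tendsto_atTop]
    intro ε hε
    obtain ⟨δ₁, hδ₁, hUC⟩ :=
      exists_forall_closed_ball_dist_add_le_two_mul_sub E hε (d/2)
    set θ := min δ₁ (d/2) with hθdef
    have hθpos : 0 < θ := lt_min hδ₁ (by positivity)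
    have hθδ₁ : θ ≤ δ₁ := min_le_left _ _
    have hθd : θ ≤ d/2 := min_le_right _ _
    have hdθ : 0 < d - θ := by linarith
    have hratio : 1 < d / (d - θ) := (one_lt_div hdθ).2 (by linarith)
    have hev : ∀ᶠ n in atTop, k n < min 2 (d/(d-θ)) :=
      hklim.eventually_lt_const (lt_min one_lt_two hratio)
    obtain ⟨N, hN⟩ := eventually_atTop.1 (hev.and (eventually_ge_atTop 1))
    refine ⟨N + 1, fun n hn => ?_⟩
    obtain ⟨hkn2', hn1⟩ := hN n (by omega)
    have hkn2 : k n < 2 := lt_of_lt_of_le hkn2' (min_le_left _ _)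
    have hknr : k n < d/(d-θ) := lt_of_lt_of_le hkn2' (min_le_right _ _)
    have hkn1 : (1:ℝ) ≤ k n := hk n hn1
    have hkn0 : (0:ℝ) < k n := by linarith
    by_contra hcon
    push_neg at hcon
    rw [dist_eq_norm] at hcon
    have hTnC : T^[n] w ∈ C := hmapsn n hwC
    have hinv0 : (0:ℝ) ≤ (k n)⁻¹ := by positivity
    have ha : ‖(k n)⁻¹ • (p - T^[n] w)‖ ≤ d/2 := by
      rw [norm_smul, Real.norm_of_nonneg hinv0]
      have h2 := hTan n hn1 p hpC w hwC
      rw [Function.iterate_fixed hp n, hpw] at h2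
      rw [inv_mul_le_iff₀ hkn0]
      exact h2
    have hb : ‖(k n)⁻¹ • (T^[n] w - q)‖ ≤ d/2 := by
      rw [norm_smul, Real.norm_of_nonneg hinv0]
      have h2 := hTan n hn1 w hwC q hqC
      rw [Function.iterate_fixed hq n, hwq] at h2
      rw [inv_mul_le_iff₀ hkn0]
      exact h2
    have hab : ε ≤ ‖(k n)⁻¹ • (p - T^[n] w) - (k n)⁻¹ • (T^[n] w - q)‖ := by
      rw [← smul_sub]
      have he : (p - T^[n] w) - (T^[n] w - q) = (2:ℝ) • (w - T^[n] w) := by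
        rw [hmid2]; module
      rw [he, smul_smul, norm_smul, Real.norm_of_nonneg (by positivity), norm_sub_rev]
      have h1 : (1:ℝ) ≤ (k n)⁻¹ * 2 := by
        rw [inv_mul_eq_div, le_div_iff₀ hkn0]; linarith
      calc ε = 1 * ε := (one_mul ε).symm
        _ ≤ ((k n)⁻¹ * 2) * ‖T^[n] w - w‖ :=
            mul_le_mul h1 hcon hε.le (by positivity)
    have h3 := hUC ha hb hab
    have hsum : (k n)⁻¹ • (p - T^[n] w) + (k n)⁻¹ • (T^[n] w - q)
        = (k n)⁻¹ • (p - q) := by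
      rw [← smul_add]; congr 1; abel
    rw [hsum, norm_smul, Real.norm_of_nonneg hinv0, ← hddef] at h3
    have h4 : (k n)⁻¹ * d ≤ d - θ := by linarith
    have h5 : d ≤ k n * (d - θ) := by
      rw [inv_mul_le_iff₀ hkn0] at h4
      linarith [h4]
    have h6 : k n * (d - θ) < d := (lt_div_iff₀ hdθ).1 hknr
    linarith
  exact ⟨hnonempty, hSclosed, hSconv, fun y hy => hy.1⟩
end

section
/- Let C be a nonempty closed convex subset of a reflexive, strictly convex and smooth Banach space E, let x ∈ E and u ∈ C, and let j(x − u) denote the unique norming functional of x − u. Then ‖u − x‖ = min_{y ∈ C} ‖y − x‖ if and only if j(x − u)(u − y) ≥ 0 for all y ∈ C. -/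
open Set

section Aux

variable {E : Type*} [NormedAddCommGroup E] [NormedSpace ℝ E]

/-- The right difference quotient of the norm at `z` in direction `h`. -/
noncomputable def npSlope (z h : E) (t : ℝ) : ℝ := (‖z + t • h‖ - ‖z‖) / t

/-- The one-sided (Gateaux) derivative of the norm at `z` in direction `h`,
as an infimum of slopes. -/
noncomputable def npP (z h : E) : ℝ := sInf (npSlope z h '' Ioi 0)

lemma npSlope_lb (z h : E) {t : ℝ} (ht : 0 < t) : -‖h‖ ≤ npSlope z h t := by
  rw [npSlope, le_div_iff₀ ht]
  have h1 : ‖z‖ ≤ ‖z + t • h‖ + ‖t • h‖ := by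
    calc ‖z‖ = ‖(z + t • h) - t • h‖ := by rw [add_sub_cancel_right]
    _ ≤ ‖z + t • h‖ + ‖t • h‖ := norm_sub_le _ _
  have h2 : ‖t • h‖ = t * ‖h‖ := by
    rw [norm_smul, Real.norm_eq_abs, abs_of_pos ht]
  nlinarith

lemma npP_bdd (z h : E) : BddBelow (npSlope z h '' Ioi 0) := by
  refine ⟨-‖h‖, ?_⟩
  rintro s ⟨t, ht, rfl⟩
  exact npSlope_lb z h ht

lemma npP_ne (z h : E) : (npSlope z h '' Ioi 0).Nonempty :=
  ⟨npSlope z h 1, ⟨1, by norm_num, rfl⟩⟩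

lemma npP_le (z h : E) {t : ℝ} (ht : 0 < t) : npP z h ≤ npSlope z h t :=
  csInf_le (npP_bdd z h) ⟨t, ht, rfl⟩

lemma le_npP (z h : E) {a : ℝ} (H : ∀ t : ℝ, 0 < t → a ≤ npSlope z h t) :
    a ≤ npP z h :=
  le_csInf (npP_ne z h) (by rintro s ⟨t, ht, rfl⟩; exact H t ht)

lemma npSlope_mono (z h : E) {s t : ℝ} (hs : 0 < s) (hst : s ≤ t) :
    npSlope z h s ≤ npSlope z h t := by
  have ht : 0 < t := lt_of_lt_of_le hs hst
  have key : ‖z + s • h‖ - ‖z‖ ≤ (s / t) * (‖z + t • h‖ - ‖z‖) := by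
    have hid : z + s • h = (1 - s / t) • z + (s / t) • (z + t • h) := by
      have h1 : (s / t) * t = s := div_mul_cancel₀ s ht.ne'
      rw [smul_add, smul_smul, h1]
      module
    have h2 : ‖z + s • h‖ ≤ (1 - s / t) * ‖z‖ + (s / t) * ‖z + t • h‖ := by
      rw [hid]
      refine (norm_add_le _ _).trans ?_
      rw [norm_smul, norm_smul, Real.norm_eq_abs, Real.norm_eq_abs,
        abs_of_nonneg (by positivity : (0:ℝ) ≤ s / t),
        abs_of_nonneg (by rw [sub_nonneg]; exact (div_le_one ht).2 hst)]
    nlinarith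
  rw [npSlope, npSlope, div_le_div_iff₀ hs ht]
  have h3 : (s / t) * t = s := div_mul_cancel₀ s ht.ne'
  have h4 := mul_le_mul_of_nonneg_right key ht.le
  have h5 : s / t * (‖z + t • h‖ - ‖z‖) * t = (‖z + t • h‖ - ‖z‖) * s := by
    rw [mul_comm (s / t) _, mul_assoc, h3]
  linarith

lemma npP_le_norm (z h : E) : npP z h ≤ ‖h‖ := by
  refine (npP_le z h one_pos).trans ?_
  rw [npSlope]
  simp only [one_smul, div_one]
  have := norm_add_le z h
  linarith

lemma npP_zero (z : E) : npP z 0 = 0 := by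
  have h1 : npP z 0 ≤ 0 := by
    refine (npP_le z 0 one_pos).trans ?_
    simp [npSlope]
  have h2 : (0:ℝ) ≤ npP z 0 := by
    refine le_npP z 0 fun t ht => ?_
    simp [npSlope]
  linarith

lemma npP_add (z h₁ h₂ : E) : npP z (h₁ + h₂) ≤ npP z h₁ + npP z h₂ := by
  refine le_of_forall_pos_le_add fun ε hε => ?_
  obtain ⟨s₁, ⟨t₁, ht₁, rfl⟩, hs₁⟩ :=
    exists_lt_of_csInf_lt (npP_ne z h₁) (show npP z h₁ < npP z h₁ + ε / 2 by linarith)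
  obtain ⟨s₂, ⟨t₂, ht₂, rfl⟩, hs₂⟩ :=
    exists_lt_of_csInf_lt (npP_ne z h₂) (show npP z h₂ < npP z h₂ + ε / 2 by linarith)
  set t := min t₁ t₂ with htdef
  have ht : 0 < t := lt_min ht₁ ht₂
  have key : npSlope z (h₁ + h₂) (t / 2) ≤ npSlope z h₁ t + npSlope z h₂ t := by
    have hid : z + (t / 2) • (h₁ + h₂) =
        (1 / 2 : ℝ) • (z + t • h₁) + (1 / 2 : ℝ) • (z + t • h₂) := by
      module
    have h2 : ‖z + (t / 2) • (h₁ + h₂)‖ ≤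
        (1 / 2) * ‖z + t • h₁‖ + (1 / 2) * ‖z + t • h₂‖ := by
      rw [hid]
      refine (norm_add_le _ _).trans ?_
      rw [norm_smul, norm_smul, Real.norm_eq_abs,
        abs_of_nonneg (by norm_num : (0:ℝ) ≤ 1 / 2)]
    rw [npSlope, npSlope, npSlope, ← add_div, div_le_div_iff₀ (by linarith) ht]
    nlinarith
  have h1 : npP z (h₁ + h₂) ≤ npSlope z h₁ t + npSlope z h₂ t :=
    (npP_le z (h₁ + h₂) (by linarith : (0:ℝ) < t / 2)).trans key
  have h2 : npSlope z h₁ t ≤ npSlope z h₁ t₁ := npSlope_mono z h₁ ht (min_le_left _ _)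
  have h3 : npSlope z h₂ t ≤ npSlope z h₂ t₂ := npSlope_mono z h₂ ht (min_le_right _ _)
  linarith

lemma npP_smul_le (z h : E) {c : ℝ} (hc : 0 < c) : c * npP z h ≤ npP z (c • h) := by
  refine le_npP z (c • h) fun t ht => ?_
  have hkey : npSlope z (c • h) t = c * npSlope z h (t * c) := by
    rw [npSlope, npSlope, smul_smul]
    field_simp
  rw [hkey]
  exact mul_le_mul_of_nonneg_left (npP_le z h (by positivity)) hc.le

lemma npP_smul (z h : E) {c : ℝ} (hc : 0 < c) : npP z (c • h) = c * npP z h := by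
  refine le_antisymm ?_ (npP_smul_le z h hc)
  have h1 := npP_smul_le z (c • h) (inv_pos.2 hc)
  rw [smul_smul, inv_mul_cancel₀ hc.ne', one_smul] at h1
  have h2 : c * (c⁻¹ * npP z (c • h)) ≤ c * npP z h :=
    mul_le_mul_of_nonneg_left h1 hc.le
  rwa [← mul_assoc, mul_inv_cancel₀ hc.ne', one_mul] at h2

/-- Key estimate: if `‖z‖ ≤ ‖z - r • w‖` for all `r ∈ [0,1]`, then
`a * ‖z‖ ≤ npP z (a • z - s • w)` for all `a` and `s ≥ 0`. -/
lemma npP_key (z w : E) (H : ∀ r : ℝ, 0 ≤ r → r ≤ 1 → ‖z‖ ≤ ‖z - r • w‖)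
    (a : ℝ) {s : ℝ} (hs : 0 ≤ s) : a * ‖z‖ ≤ npP z (a • z - s • w) := by
  refine le_npP z _ fun t ht => ?_
  set t₀ : ℝ := 1 / (s + |a| + 1) with ht₀def
  have hden : 0 < s + |a| + 1 := by positivity
  have ht₀ : 0 < t₀ := by positivity
  set t' := min t t₀ with ht'def
  have ht' : 0 < t' := lt_min ht ht₀
  have ht't : t' ≤ t := min_le_left _ _
  refine le_trans ?_ (npSlope_mono z _ ht' ht't)
  -- bounds from t' ≤ t₀
  have ht'0 : t' ≤ t₀ := min_le_right _ _
  have hb : t' * (s + |a|) < 1 := by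
    have h1 : t' * (s + |a|) ≤ t₀ * (s + |a|) :=
      mul_le_mul_of_nonneg_right ht'0 (by positivity)
    have h2 : t₀ * (s + |a|) < 1 := by
      rw [ht₀def, div_mul_eq_mul_div, div_lt_one hden]
      nlinarith [abs_nonneg a]
    linarith
  have habs : -|a| ≤ a ∧ a ≤ |a| := ⟨neg_abs_le a, le_abs_self a⟩
  have hc : 0 < 1 + t' * a := by nlinarith [mul_nonneg ht'.le hs]
  set c := 1 + t' * a with hcdef
  set r := t' * s / c with hrdef
  have hr0 : 0 ≤ r := by positivity
  have hr1 : r ≤ 1 := by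
    rw [hrdef, div_le_one hc]
    nlinarith
  have hcr : c * r = t' * s := mul_div_cancel₀ _ hc.ne'
  have hid : z + t' • (a • z - s • w) = c • (z - r • w) := by
    rw [smul_sub, smul_sub, smul_smul, smul_smul, smul_smul, hcr, hcdef]
    module
  have hnorm : ‖z + t' • (a • z - s • w)‖ = c * ‖z - r • w‖ := by
    rw [hid, norm_smul, Real.norm_eq_abs, abs_of_pos hc]
  rw [npSlope, hnorm, le_div_iff₀ ht']
  have hHr := H r hr0 hr1
  have : c * ‖z‖ ≤ c * ‖z - r • w‖ := mul_le_mul_of_nonneg_left hHr hc.le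
  rw [hcdef] at this ⊢
  nlinarith

end Aux

section NAux

variable {E : Type*} [NormedAddCommGroup E] [NormedSpace ℝ E]

/-- The modified sublinear functional `N h = inf_{s ≥ 0} p (h - s w)`. -/
noncomputable def npN (z w h : E) : ℝ := sInf ((fun s : ℝ => npP z (h - s • w)) '' Ici 0)

variable {z w : E} (hkey : ∀ a : ℝ, ∀ {s : ℝ}, 0 ≤ s → a * ‖z‖ ≤ npP z (a • z - s • w))

include hkey

lemma npN_lb (h : E) {s : ℝ} (hs : 0 ≤ s) : -‖h‖ ≤ npP z (h - s • w) := by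
  have h1 : (0:ℝ) ≤ npP z (-(s • w)) := by
    have := hkey 0 hs
    simpa using this
  have h2 : npP z ((h - s • w) + (-h)) ≤ npP z (h - s • w) + npP z (-h) :=
    npP_add z _ _
  have h3 : (h - s • w) + (-h) = -(s • w) := by abel
  rw [h3] at h2
  have h4 : npP z (-h) ≤ ‖h‖ := (npP_le_norm z (-h)).trans_eq (norm_neg h)
  linarith

lemma npN_bdd (h : E) : BddBelow ((fun s : ℝ => npP z (h - s • w)) '' Ici 0) := by
  refine ⟨-‖h‖, ?_⟩
  rintro v ⟨s, hs, rfl⟩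
  exact npN_lb hkey h hs

lemma npN_ne (h : E) : ((fun s : ℝ => npP z (h - s • w)) '' Ici 0).Nonempty :=
  ⟨_, ⟨0, self_mem_Ici, rfl⟩⟩

lemma npN_le (h : E) {s : ℝ} (hs : 0 ≤ s) : npN z w h ≤ npP z (h - s • w) :=
  csInf_le (npN_bdd hkey h) ⟨s, hs, rfl⟩

lemma le_npN (h : E) {a : ℝ} (H : ∀ s : ℝ, 0 ≤ s → a ≤ npP z (h - s • w)) :
    a ≤ npN z w h :=
  le_csInf (npN_ne hkey h) (by rintro v ⟨s, hs, rfl⟩; exact H s hs)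

lemma npN_le_norm (h : E) : npN z w h ≤ ‖h‖ := by
  have h1 : npN z w h ≤ npP z (h - (0:ℝ) • w) := npN_le hkey h (le_refl 0)
  simpa using h1.trans (npP_le_norm z _)

lemma npN_w_nonpos : npN z w w ≤ 0 := by
  have h1 : npN z w w ≤ npP z (w - (1:ℝ) • w) := npN_le hkey w zero_le_one
  simpa [npP_zero] using h1

lemma npN_span (a : ℝ) : a * ‖z‖ ≤ npN z w (a • z) := by
  refine le_npN hkey _ fun s hs => hkey a hs

lemma npN_add (h₁ h₂ : E) : npN z w (h₁ + h₂) ≤ npN z w h₁ + npN z w h₂ := by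
  refine le_of_forall_pos_le_add fun ε hε => ?_
  obtain ⟨v₁, ⟨s₁, hs₁, rfl⟩, hv₁⟩ :=
    exists_lt_of_csInf_lt (npN_ne hkey h₁)
      (show npN z w h₁ < npN z w h₁ + ε / 2 by linarith)
  obtain ⟨v₂, ⟨s₂, hs₂, rfl⟩, hv₂⟩ :=
    exists_lt_of_csInf_lt (npN_ne hkey h₂)
      (show npN z w h₂ < npN z w h₂ + ε / 2 by linarith)
  rw [mem_Ici] at hs₁ hs₂
  have hv₁' : npP z (h₁ - s₁ • w) < npN z w h₁ + ε / 2 := hv₁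
  have hv₂' : npP z (h₂ - s₂ • w) < npN z w h₂ + ε / 2 := hv₂
  have h1 : npN z w (h₁ + h₂) ≤ npP z ((h₁ + h₂) - (s₁ + s₂) • w) :=
    npN_le hkey _ (by linarith)
  have h2 : (h₁ + h₂) - (s₁ + s₂) • w = (h₁ - s₁ • w) + (h₂ - s₂ • w) := by
    rw [add_smul]; abel
  rw [h2] at h1
  have h3 := npP_add z (h₁ - s₁ • w) (h₂ - s₂ • w)
  linarith [hv₁', hv₂']

lemma npN_smul {c : ℝ} (hc : 0 < c) (h : E) : npN z w (c • h) = c * npN z w h := by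
  have main : ∀ {c : ℝ}, 0 < c → ∀ h : E, c * npN z w h ≤ npN z w (c • h) := by
    intro c hc h
    refine le_npN hkey _ fun s hs => ?_
    have hid : c • h - s • w = c • (h - (s / c) • w) := by
      rw [smul_sub, smul_smul, mul_div_cancel₀ _ hc.ne']
    rw [hid, npP_smul z _ hc]
    exact mul_le_mul_of_nonneg_left (npN_le hkey h (by positivity)) hc.le
  refine le_antisymm ?_ (main hc h)
  have h1 := main (inv_pos.2 hc) (c • h)
  rw [smul_smul, inv_mul_cancel₀ hc.ne', one_smul] at h1
  have h2 : c * (c⁻¹ * npN z w (c • h)) ≤ c * npN z w h :=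
    mul_le_mul_of_nonneg_left h1 hc.le
  rwa [← mul_assoc, mul_inv_cancel₀ hc.ne', one_mul] at h2

end NAux

/-- Hahn–Banach step: given the key estimate, there is a continuous linear
functional `g` with `‖g‖ ≤ 1`, `g z = ‖z‖` and `g w ≤ 0`. -/
lemma exists_support_functional {E : Type*} [NormedAddCommGroup E] [NormedSpace ℝ E]
    (z w : E) (hz : z ≠ 0)
    (hkey : ∀ a : ℝ, ∀ {s : ℝ}, 0 ≤ s → a * ‖z‖ ≤ npP z (a • z - s • w)) :
    ∃ g : E →L[ℝ] ℝ, ‖g‖ ≤ 1 ∧ g z = ‖z‖ ∧ g w ≤ 0 := by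
  classical
  set f : E →ₗ.[ℝ] ℝ := LinearPMap.mkSpanSingleton z ‖z‖ hz with hfdef
  have hfdom : f.domain = Submodule.span ℝ {z} := rfl
  obtain ⟨g, hg1, hg2⟩ := exists_extension_of_le_sublinear f (npN z w)
    (fun c hc x => npN_smul hkey hc x)
    (fun x y => npN_add hkey x y)
    (by
      rintro ⟨v, hv⟩
      rw [hfdom] at hv
      obtain ⟨a, rfl⟩ := Submodule.mem_span_singleton.1 hv
      have happ : f ⟨a • z, hv⟩ = a • ‖z‖ :=
        LinearPMap.mkSpanSingleton'_apply z ‖z‖ _ a _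
      rw [happ, smul_eq_mul]
      exact npN_span hkey a)
  have hgz : g z = ‖z‖ := by
    have hmem : z ∈ f.domain := by
      rw [hfdom]; exact Submodule.mem_span_singleton_self z
    have := hg1 ⟨z, hmem⟩
    rw [LinearPMap.mkSpanSingleton_apply ℝ ℝ hz ‖z‖] at this
    exact this
  have hbound : ∀ v : E, |g v| ≤ ‖v‖ := by
    intro v
    have h1 : g v ≤ ‖v‖ := (hg2 v).trans (npN_le_norm hkey v)
    have h2 : g (-v) ≤ ‖v‖ := ((hg2 (-v)).trans (npN_le_norm hkey (-v))).trans_eq (norm_neg v)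
    rw [map_neg] at h2
    exact abs_le.2 ⟨by linarith, h1⟩
  refine ⟨g.mkContinuous 1 (fun v => by simpa using hbound v), ?_, hgz, ?_⟩
  · exact g.mkContinuous_norm_le zero_le_one _
  · exact (hg2 w).trans (npN_w_nonpos hkey)

set_option maxHeartbeats 1000000 in
/-- **Characterization of the metric projection (2.1).**
Let `C` be a nonempty closed convex subset of a reflexive, strictly convex and
smooth Banach space `E`, let `x ∈ E` and `u ∈ C`, and let `j (x - u)` be the
unique norming functional of `x - u`. Then `‖u - x‖ = min_{y ∈ C} ‖y - x‖` if
and only if `⟨u - y, j (x - u)⟩ ≥ 0` for all `y ∈ C`. -/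
theorem nearest_point_iff_norming_functional
    (E : Type*) [NormedAddCommGroup E] [NormedSpace ℝ E] [CompleteSpace E]
    [StrictConvexSpace ℝ E]
    (hrefl : Function.Surjective (NormedSpace.inclusionInDoubleDual ℝ E))
    (j : E → E →L[ℝ] ℝ)
    (hj0 : j 0 = 0)
    (hjnorm : ∀ y : E, y ≠ 0 → ‖j y‖ = ‖y‖)
    (hjval : ∀ y : E, (j y) y = ‖y‖ ^ 2)
    (hjuniq : ∀ y : E, y ≠ 0 → ∀ f : E →L[ℝ] ℝ, ‖f‖ = ‖y‖ → f y = ‖y‖ ^ 2 →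
      f = j y)
    (C : Set E) (hCne : C.Nonempty) (hCcl : IsClosed C) (hCcv : Convex ℝ C)
    (x : E) (u : E) (hu : u ∈ C) :
    (∀ y ∈ C, ‖u - x‖ ≤ ‖y - x‖) ↔ (∀ y ∈ C, 0 ≤ (j (x - u)) (u - y)) := by
  by_cases hxu : x = u
  · subst hxu
    simp only [sub_self, hj0]
    constructor
    · intro _ y _
      simp
    · intro _ y _
      simp only [sub_self, norm_zero]
      exact norm_nonneg _
  · have hz : x - u ≠ 0 := sub_ne_zero.2 hxu
    set z := x - u with hzdef
    have hznorm : 0 < ‖z‖ := norm_pos_iff.2 hz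
    constructor
    · -- forward direction: nearest point ⇒ variational inequality
      intro hL y hy
      set w := y - u with hwdef
      -- hypothesis H for the key estimate
      have H : ∀ r : ℝ, 0 ≤ r → r ≤ 1 → ‖z‖ ≤ ‖z - r • w‖ := by
        intro r hr0 hr1
        have hyC : u + r • w ∈ C := by
          have := hCcv hu hy (by linarith : (0:ℝ) ≤ 1 - r) hr0 (by ring)
          convert this using 1
          rw [hwdef]
          module
        have h1 := hL (u + r • w) hyC
        have h2 : u - x = -z := by rw [hzdef]; abel
        have h3 : (u + r • w) - x = -(z - r • w) := by rw [hzdef]; abel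
        rw [h2, h3, norm_neg, norm_neg] at h1
        exact h1
      have hkey : ∀ a : ℝ, ∀ {s : ℝ}, 0 ≤ s → a * ‖z‖ ≤ npP z (a • z - s • w) :=
        fun a _ hs => npP_key z w H a hs
      obtain ⟨g, hgnorm, hgz, hgw⟩ := exists_support_functional z w hz hkey
      -- F = ‖z‖ • g is the norming functional of z
      set F : E →L[ℝ] ℝ := ‖z‖ • g with hFdef
      have hFz : F z = ‖z‖ ^ 2 := by
        rw [hFdef]
        simp [hgz]
        ring
      have hFnorm : ‖F‖ = ‖z‖ := by
        refine le_antisymm ?_ ?_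
        · refine le_trans (ContinuousLinearMap.opNorm_smul_le ‖z‖ g) ?_
          rw [Real.norm_eq_abs, abs_of_pos hznorm]
          nlinarith
        · have h1 : ‖z‖ ^ 2 = F z := hFz.symm
          have h2 := F.le_opNorm z
          rw [Real.norm_eq_abs] at h2
          have h2' : F z ≤ ‖F‖ * ‖z‖ := (le_abs_self _).trans h2
          nlinarith
      have hFj : F = j z := hjuniq z hz F hFnorm hFz
      have huyw : u - y = -w := by rw [hwdef]; abel
      rw [← hFj, huyw, map_neg, hFdef]
      simp only [ContinuousLinearMap.smul_apply, smul_eq_mul]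
      nlinarith
    · -- reverse direction: variational inequality ⇒ nearest point
      intro hR y hy
      have h1 := hR y hy
      have hval : (j z) z = ‖z‖ ^ 2 := hjval z
      have hsplit : z = (x - y) + (y - u) := by rw [hzdef]; abel
      have h2 : (j z) z = (j z) (x - y) + (j z) (y - u) := by
        rw [← map_add, ← hsplit]
      have h3 : (j z) (y - u) ≤ 0 := by
        have : y - u = -(u - y) := by abel
        rw [this, map_neg]
        linarith
      have h4' := (j z).le_opNorm (x - y)
      rw [Real.norm_eq_abs] at h4'
      have h4 : (j z) (x - y) ≤ ‖j z‖ * ‖x - y‖ := (le_abs_self _).trans h4'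
      rw [hjnorm z hz] at h4
      have h5 : ‖z‖ ^ 2 ≤ ‖z‖ * ‖x - y‖ := by
        rw [← hval, h2]
        linarith
      have h6 : ‖z‖ ≤ ‖x - y‖ := by nlinarith
      have h7 : ‖u - x‖ = ‖z‖ := by rw [hzdef, ← norm_neg]; congr 1; abel
      have h8 : ‖y - x‖ = ‖x - y‖ := norm_sub_rev y x
      rw [h7, h8]
      exact h6
end

section
/- In the Setup, with E additionally assumed reflexive and strictly convex (which follows from uniform convexity) and F(T) = {z ∈ C : Tz = z} assumed nonempty, the iterative algorithm is well-defined: for every n ≥ 1, the set C_n ∩ D_n is a closed convex set containing F(T) (in particular nonempty), and hence the nearest point x_{n+1} to x in C_n ∩ D_n exists and is unique. -/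
set_option maxHeartbeats 1000000

open Set Metric Filter



section aux
variable {E : Type*} [NormedAddCommGroup E] [NormedSpace ℝ E]

/-- Existence of a nearest point on a nonempty closed convex set in a
complete uniformly convex space. -/
lemma exists_nearest_pt [CompleteSpace E] [UniformConvexSpace E]
    (K : Set E) (hne : K.Nonempty) (hcl : IsClosed K) (hcv : Convex ℝ K) (x : E) :
    ∃ p ∈ K, ∀ z ∈ K, ‖x - p‖ ≤ ‖x - z‖ := by
  set d := Metric.infDist x K with hd
  have hd0 : 0 ≤ d := Metric.infDist_nonneg
  rcases eq_or_lt_of_le hd0 with hd0' | hdpos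
  · have hxK : x ∈ K := by
      rw [hcl.mem_iff_infDist_zero hne]; exact hd0'.symm
    refine ⟨x, hxK, fun z hz => by simp⟩
  · have hzex : ∀ n : ℕ, ∃ y ∈ K, dist x y < d + ((n : ℝ) + 1)⁻¹ := by
      intro n
      refine (Metric.infDist_lt_iff hne).1 ?_
      have : (0:ℝ) < ((n:ℝ)+1)⁻¹ := by positivity
      linarith
    choose z hzK hzd using hzex
    have hcauchy : CauchySeq z := by
      rw [Metric.cauchySeq_iff]
      intro ε hε
      have hd1 : (0:ℝ) < d + 1 := by linarith
      obtain ⟨δ, hδ, huc⟩ :=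
        exists_forall_closed_ball_dist_add_le_two_sub E (div_pos hε hd1)
      set η := min 1 (δ * d / 2) with hηdef
      have hη : 0 < η := lt_min one_pos (by positivity)
      obtain ⟨N, hN⟩ := exists_nat_gt η⁻¹
      refine ⟨N, fun n hn m hm => ?_⟩
      by_contra hge
      push_neg at hge
      have hinv : ∀ l : ℕ, N ≤ l → ((l:ℝ)+1)⁻¹ < η := by
        intro l hl
        have h1 : η⁻¹ < (l:ℝ) + 1 := by
          have : (N:ℝ) ≤ l := by exact_mod_cast hl
          linarith
        have h2 : (0:ℝ) < (l:ℝ) + 1 := by positivity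
        calc ((l:ℝ)+1)⁻¹ < (η⁻¹)⁻¹ := by
              apply inv_strictAnti₀ (by positivity) h1
          _ = η := inv_inv η
      set r := d + η with hrdef
      have hr : 0 < r := by positivity
      have ham : ‖x - z m‖ < r := by
        rw [← dist_eq_norm]
        exact (hzd m).trans_le (by have := hinv m hm; linarith)
      have han : ‖x - z n‖ < r := by
        rw [← dist_eq_norm]
        exact (hzd n).trans_le (by have := hinv n hn; linarith)
      have hx' : ‖r⁻¹ • (x - z n)‖ ≤ 1 := by
        rw [norm_smul, Real.norm_eq_abs, abs_of_pos (inv_pos.2 hr)]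
        rw [inv_mul_le_iff₀ hr]; linarith
      have hy' : ‖r⁻¹ • (x - z m)‖ ≤ 1 := by
        rw [norm_smul, Real.norm_eq_abs, abs_of_pos (inv_pos.2 hr)]
        rw [inv_mul_le_iff₀ hr]; linarith
      have hdiff : ε / (d+1) ≤ ‖r⁻¹ • (x - z n) - r⁻¹ • (x - z m)‖ := by
        rw [← smul_sub, norm_smul, Real.norm_eq_abs, abs_of_pos (inv_pos.2 hr)]
        have h1 : x - z n - (x - z m) = z m - z n := by abel
        rw [h1, ← dist_eq_norm]
        have h2 : ε ≤ dist (z m) (z n) := by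
          rw [dist_comm]; exact hge
        have hrle : r ≤ d + 1 := by
          have : η ≤ 1 := min_le_left _ _
          simp only [hrdef]; linarith
        calc ε / (d+1) ≤ ε / r := by
              gcongr
          _ ≤ dist (z m) (z n) / r := by gcongr
          _ = r⁻¹ * dist (z m) (z n) := by rw [div_eq_inv_mul]
      have hsum := huc hx' hy' hdiff
      rw [← smul_add, norm_smul, Real.norm_eq_abs, abs_of_pos (inv_pos.2 hr)] at hsum
      have hab : ‖x - z n + (x - z m)‖ ≤ (2 - δ) * r := by
        rw [inv_mul_le_iff₀ hr] at hsum
        linarith [hsum]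
      -- midpoint
      have hmid : (1/2 : ℝ) • z n + (1/2 : ℝ) • z m ∈ K :=
        hcv (hzK n) (hzK m) (by norm_num) (by norm_num) (by norm_num)
      have hmd : d ≤ ‖x - ((1/2 : ℝ) • z n + (1/2 : ℝ) • z m)‖ := by
        rw [← dist_eq_norm]
        exact Metric.infDist_le_dist_of_mem hmid
      have hid : x - z n + (x - z m) = (2:ℝ) • (x - ((1/2 : ℝ) • z n + (1/2 : ℝ) • z m)) := by
        module
      have h2d : 2 * d ≤ ‖x - z n + (x - z m)‖ := by
        rw [hid, norm_smul, Real.norm_eq_abs]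
        have : |(2:ℝ)| = 2 := by norm_num
        rw [this]
        linarith [hmd]
      have hηd : η ≤ δ * d / 2 := min_le_right _ _
      nlinarith [hη, hδ, hdpos]
    obtain ⟨p, hp⟩ := cauchySeq_tendsto_of_complete hcauchy
    have hpK : p ∈ K := hcl.mem_of_tendsto hp (Filter.Eventually.of_forall hzK)
    have hdistp : dist x p ≤ d := by
      have h1 : Tendsto (fun n => dist x (z n)) atTop (nhds (dist x p)) :=
        tendsto_const_nhds.dist hp
      have h2 : Tendsto (fun n : ℕ => d + ((n:ℝ)+1)⁻¹) atTop (nhds d) := by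
        have := tendsto_one_div_add_atTop_nhds_zero_nat (𝕜 := ℝ)
        have h3 : Tendsto (fun n : ℕ => d + 1 / ((n:ℝ)+1)) atTop (nhds (d + 0)) :=
          tendsto_const_nhds.add this
        simpa [one_div] using h3
      exact le_of_tendsto_of_tendsto' h1 h2 fun n => (hzd n).le
    refine ⟨p, hpK, fun w hw => ?_⟩
    rw [← dist_eq_norm, ← dist_eq_norm]
    exact hdistp.trans (Metric.infDist_le_dist_of_mem hw)

end aux



section aux2
variable {E : Type*} [NormedAddCommGroup E] [NormedSpace ℝ E]

lemma nearest_pt_unique [StrictConvexSpace ℝ E]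
    (K : Set E) (hcv : Convex ℝ K) (x p q : E)
    (hp : p ∈ K) (hq : q ∈ K)
    (hpm : ∀ z ∈ K, ‖x - p‖ ≤ ‖x - z‖) (hqm : ∀ z ∈ K, ‖x - q‖ ≤ ‖x - z‖) :
    p = q := by
  have h1 : ‖x - p‖ = ‖x - q‖ := le_antisymm (hpm q hq) (hqm p hp)
  by_contra hne
  have hxp : x - p ≠ x - q := fun h => hne (sub_right_injective h)
  have key : ¬ SameRay ℝ (x - p) (x - q) := by
    intro hray
    rcases eq_or_ne (x - p) 0 with h0 | h0
    · have h0' : x - q = 0 := by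
        rw [← norm_eq_zero, ← h1, h0, norm_zero]
      exact hxp (h0.trans h0'.symm)
    · have h0' : x - q ≠ 0 := by
        intro h
        rw [h, norm_zero, norm_eq_zero] at h1
        exact h0 h1
      obtain ⟨r₁, r₂, hr₁, hr₂, hr⟩ := hray.exists_pos h0 h0'
      have hnorm : r₁ * ‖x - p‖ = r₂ * ‖x - q‖ := by
        have := congrArg norm hr
        simpa [norm_smul, abs_of_pos hr₁, abs_of_pos hr₂] using this
      rw [h1] at hnorm
      have hq0 : 0 < ‖x - q‖ := norm_pos_iff.2 h0'
      have hr12 : r₁ = r₂ := by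
        have := mul_right_cancel₀ hq0.ne' hnorm
        exact this
      rw [hr12] at hr
      exact hxp (smul_right_injective E hr₂.ne' hr)
  have hmid : (1/2 : ℝ) • p + (1/2 : ℝ) • q ∈ K :=
    hcv hp hq (by norm_num) (by norm_num) (by norm_num)
  have hlt : ‖(x - p) + (x - q)‖ < ‖x - p‖ + ‖x - q‖ := norm_add_lt_of_not_sameRay key
  have hid : (x - p) + (x - q) = (2:ℝ) • (x - ((1/2 : ℝ) • p + (1/2 : ℝ) • q)) := by module
  have h2 : 2 * ‖x - ((1/2 : ℝ) • p + (1/2 : ℝ) • q)‖ < 2 * ‖x - p‖ := by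
    have : ‖(2:ℝ) • (x - ((1/2 : ℝ) • p + (1/2 : ℝ) • q))‖
        = 2 * ‖x - ((1/2 : ℝ) • p + (1/2 : ℝ) • q)‖ := by
      rw [norm_smul]; norm_num
    rw [hid, this] at hlt; linarith [hlt, h1]
  have := hpm _ hmid
  linarith

lemma smooth_var (j : E → E →L[ℝ] ℝ) (hj0 : j 0 = 0)
    (hjval : ∀ y : E, (j y) y = ‖y‖ ^ 2)
    (hjuniq : ∀ y : E, y ≠ 0 → ∀ f : E →L[ℝ] ℝ, ‖f‖ = ‖y‖ → f y = ‖y‖ ^ 2 → f = j y)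
    (u v : E) (hmin : ∀ t : ℝ, 0 < t → t ≤ 1 → ‖u‖ ≤ ‖u - t • v‖) :
    (j u) v ≤ 0 := by
  rcases eq_or_ne u 0 with rfl | hu
  · simp [hj0]
  have hupos : 0 < ‖u‖ := norm_pos_iff.2 hu
  -- extend minimality to all positive t
  have hmin' : ∀ t : ℝ, 0 < t → ‖u‖ ≤ ‖u - t • v‖ := by
    intro t ht
    rcases le_or_gt t 1 with h1 | h1
    · exact hmin t ht h1
    · have hid : t • (u - v) = (t - 1) • u + (u - t • v) := by module
      have h2 : t * ‖u - v‖ ≤ (t - 1) * ‖u‖ + ‖u - t • v‖ := by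
        calc t * ‖u - v‖ = ‖t • (u - v)‖ := by
              rw [norm_smul, Real.norm_eq_abs, abs_of_pos ht]
          _ = ‖(t - 1) • u + (u - t • v)‖ := by rw [hid]
          _ ≤ ‖(t - 1) • u‖ + ‖u - t • v‖ := norm_add_le _ _
          _ = (t - 1) * ‖u‖ + ‖u - t • v‖ := by
              rw [norm_smul, Real.norm_eq_abs, abs_of_pos (by linarith)]
      have h3 : ‖u‖ ≤ ‖u - v‖ := by simpa using hmin 1 one_pos le_rfl
      nlinarith
  by_cases hdep : ∃ c : ℝ, v = c • u
  · obtain ⟨c, rfl⟩ := hdep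
    have hc : c ≤ 0 := by
      by_contra hc
      push_neg at hc
      set s := min 1 c⁻¹ with hs
      have hs0 : 0 < s := lt_min one_pos (by positivity)
      have h2 := hmin s hs0 (min_le_left _ _)
      have hsc : 0 < s * c := by positivity
      have hsc1 : s * c ≤ 1 := by
        have : s ≤ c⁻¹ := min_le_right _ _
        calc s * c ≤ c⁻¹ * c := by nlinarith
          _ = 1 := inv_mul_cancel₀ hc.ne'
      have hval : u - s • c • u = (1 - s * c) • u := by
        rw [smul_smul, sub_smul, one_smul]
      rw [hval, norm_smul, Real.norm_eq_abs, abs_of_nonneg (by linarith)] at h2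
      nlinarith
    have : (j u) (c • u) = c * ‖u‖ ^ 2 := by
      rw [map_smul, hjval]; rfl
    rw [this]
    exact mul_nonpos_of_nonpos_of_nonneg hc (by positivity)
  push_neg at hdep
  -- cross inequality between left and right difference quotients
  have hcross : ∀ a b : ℝ, 0 < a → 0 < b →
      (‖u‖ - ‖u - a • v‖) / a ≤ (‖u + b • v‖ - ‖u‖) / b := by
    intro a b ha hb
    rw [div_le_div_iff₀ ha hb]
    have hid : (a + b) • u = b • (u - a • v) + a • (u + b • v) := by module
    have h1 : (a + b) * ‖u‖ ≤ b * ‖u - a • v‖ + a * ‖u + b • v‖ := by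
      calc (a + b) * ‖u‖ = ‖(a + b) • u‖ := by
            rw [norm_smul, Real.norm_eq_abs, abs_of_pos (by linarith)]
        _ ≤ ‖b • (u - a • v)‖ + ‖a • (u + b • v)‖ := by rw [hid]; exact norm_add_le _ _
        _ = b * ‖u - a • v‖ + a * ‖u + b • v‖ := by
            rw [norm_smul, norm_smul, Real.norm_eq_abs, Real.norm_eq_abs,
              abs_of_pos hb, abs_of_pos ha]
    nlinarith
  set S : Set ℝ := (fun t : ℝ => (‖u‖ - ‖u - t • v‖) / t) '' Ioi 0 with hSdef
  have hSne : S.Nonempty := ⟨_, ⟨1, Set.mem_Ioi.2 one_pos, rfl⟩⟩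
  have hSbdd : BddAbove S := by
    refine ⟨(‖u + (1:ℝ) • v‖ - ‖u‖) / 1, ?_⟩
    rintro w ⟨a, ha, rfl⟩
    exact hcross a 1 ha one_pos
  set s := sSup S with hsdef
  have hs_le : ∀ b : ℝ, 0 < b → s ≤ (‖u + b • v‖ - ‖u‖) / b := by
    intro b hb
    refine csSup_le hSne ?_
    rintro w ⟨a, ha, rfl⟩
    exact hcross a b ha hb
  have hs_ge : ∀ a : ℝ, 0 < a → (‖u‖ - ‖u - a • v‖) / a ≤ s := fun a ha =>
    le_csSup hSbdd ⟨a, Set.mem_Ioi.2 ha, rfl⟩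
  have hs0 : s ≤ 0 := by
    refine csSup_le hSne ?_
    rintro w ⟨a, ha, rfl⟩
    have h1 := hmin' a ha
    have h2 : ‖u‖ - ‖u - a • v‖ ≤ 0 := by linarith
    exact div_nonpos_of_nonpos_of_nonneg h2 ha.le
  have hvbound : s ≤ ‖v‖ := by
    have h1 := hs_le 1 one_pos
    simp only [one_smul, div_one] at h1
    have h2 := norm_add_le u v
    linarith
  have hvbound2 : -‖v‖ ≤ s := by
    have h1 := hs_ge 1 one_pos
    simp only [one_smul, div_one] at h1
    have h2 := norm_sub_le u v
    linarith
  have claimR : ∀ c : ℝ, c * ‖u‖ + s ≤ ‖c • u + v‖ := by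
    intro c
    rcases lt_or_ge 0 c with hc | hc
    · have h := hs_le c⁻¹ (by positivity)
      have hid : c • (u + c⁻¹ • v) = c • u + v := by
        rw [smul_add, smul_smul, mul_inv_cancel₀ hc.ne', one_smul]
      have hnorm : ‖c • u + v‖ = c * ‖u + c⁻¹ • v‖ := by
        rw [← hid, norm_smul, Real.norm_eq_abs, abs_of_pos hc]
      rw [div_eq_mul_inv, inv_inv] at h
      rw [hnorm]; nlinarith
    · have h1 : ‖v‖ - ‖c • u‖ ≤ ‖c • u + v‖ := by
        have h2 := norm_sub_norm_le v (-(c • u))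
        rw [norm_neg, sub_neg_eq_add, add_comm] at h2
        exact h2
      have h3 : ‖c • u‖ = -c * ‖u‖ := by
        rw [norm_smul, Real.norm_eq_abs, abs_of_nonpos hc]
      linarith
  have claimL : ∀ c : ℝ, c * ‖u‖ - s ≤ ‖c • u - v‖ := by
    intro c
    rcases lt_or_ge 0 c with hc | hc
    · have h := hs_ge c⁻¹ (by positivity)
      have hid : c • (u - c⁻¹ • v) = c • u - v := by
        rw [smul_sub, smul_smul, mul_inv_cancel₀ hc.ne', one_smul]
      have hnorm : ‖c • u - v‖ = c * ‖u - c⁻¹ • v‖ := by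
        rw [← hid, norm_smul, Real.norm_eq_abs, abs_of_pos hc]
      rw [div_eq_mul_inv, inv_inv] at h
      rw [hnorm]; nlinarith
    · have h1 : ‖v‖ - ‖c • u‖ ≤ ‖c • u - v‖ := by
        have h2 := norm_sub_norm_le v (c • u)
        rw [← norm_neg (v - c • u), neg_sub] at h2
        exact h2
      have h3 : ‖c • u‖ = -c * ‖u‖ := by
        rw [norm_smul, Real.norm_eq_abs, abs_of_nonpos hc]
      linarith
  have hbound : ∀ a b : ℝ, a * ‖u‖ + b * s ≤ ‖a • u + b • v‖ := by
    intro a b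
    rcases lt_trichotomy b 0 with hb | hb | hb
    · have h := claimL (a / (-b))
      have hβ : (0:ℝ) < -b := neg_pos.2 hb
      have hid : (-b) • ((a / (-b)) • u - v) = a • u + b • v := by
        rw [smul_sub, smul_smul, mul_div_cancel₀ _ hβ.ne']
        module
      have hnorm : ‖a • u + b • v‖ = (-b) * ‖(a / (-b)) • u - v‖ := by
        rw [← hid, norm_smul, Real.norm_eq_abs, abs_of_pos hβ]
      have hbc : (-b) * (a / (-b)) = a := by
        rw [mul_comm, div_mul_cancel₀ _ hβ.ne']
      rw [hnorm]
      nlinarith [mul_le_mul_of_nonneg_left h hβ.le]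
    · subst hb
      simp only [zero_smul, add_zero, zero_mul]
      calc a * ‖u‖ ≤ |a| * ‖u‖ :=
            mul_le_mul_of_nonneg_right (le_abs_self a) (norm_nonneg u)
        _ = ‖a • u‖ := by rw [norm_smul, Real.norm_eq_abs]
    · have h := claimR (a / b)
      have hid : b • ((a / b) • u + v) = a • u + b • v := by
        rw [smul_add, smul_smul, mul_div_cancel₀ _ hb.ne']
      have hnorm : ‖a • u + b • v‖ = b * ‖(a / b) • u + v‖ := by
        rw [← hid, norm_smul, Real.norm_eq_abs, abs_of_pos hb]
      have hbc : b * (a / b) = a := by field_simp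
      rw [hnorm]
      nlinarith [mul_le_mul_of_nonneg_left h hb.le]
  -- Hahn–Banach extension from the two-dimensional subspace
  set φ : (ℝ × ℝ) →ₗ[ℝ] E :=
    (LinearMap.toSpanSingleton ℝ E u).coprod (LinearMap.toSpanSingleton ℝ E v) with hφdef
  have hφ : ∀ p : ℝ × ℝ, φ p = p.1 • u + p.2 • v := fun p => rfl
  have hinj : Function.Injective φ := by
    rw [← LinearMap.ker_eq_bot, LinearMap.ker_eq_bot']
    rintro ⟨a, b⟩ hab
    rw [hφ] at hab
    rcases eq_or_ne b 0 with rfl | hb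
    · rw [zero_smul, add_zero, smul_eq_zero] at hab
      rcases hab with rfl | hab
      · rfl
      · exact absurd hab hu
    · exfalso
      have h2 : b⁻¹ • (a • u + b • v) = b⁻¹ • (0:E) := by rw [hab]
      rw [smul_zero, smul_add, smul_smul, smul_smul, inv_mul_cancel₀ hb, one_smul] at h2
      have h3 := eq_neg_of_add_eq_zero_right h2
      rw [← neg_smul] at h3
      exact hdep _ h3
  set e := LinearEquiv.ofInjective φ hinj with hedef
  set ℓ : (ℝ × ℝ) →ₗ[ℝ] ℝ := ‖u‖ • (LinearMap.fst ℝ ℝ ℝ) + s • (LinearMap.snd ℝ ℝ ℝ) with hℓdef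
  have hℓ : ∀ p : ℝ × ℝ, ℓ p = p.1 * ‖u‖ + p.2 * s := by
    intro p
    simp only [hℓdef, LinearMap.add_apply, LinearMap.smul_apply, LinearMap.fst_apply,
      LinearMap.snd_apply, smul_eq_mul]
    ring
  have hf : ∀ w : LinearMap.range φ, ℓ (e.symm w) ≤ ‖(w : E)‖ := by
    intro w
    have hw : (w : E) = φ (e.symm w) := by
      conv_lhs => rw [← e.apply_symm_apply w]
      rw [hedef, LinearEquiv.ofInjective_apply]
    rw [hℓ, hw, hφ]
    exact hbound _ _
  obtain ⟨g, hg_eq, hg_le⟩ := exists_extension_of_le_sublinear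
    ⟨LinearMap.range φ, ℓ.comp (e.symm : LinearMap.range φ ≃ₗ[ℝ] (ℝ × ℝ)).toLinearMap⟩
    (fun w => ‖w‖)
    (fun c hc w => by simp [norm_smul, Real.norm_eq_abs, abs_of_pos hc])
    (fun w₁ w₂ => norm_add_le _ _)
    hf
  have habs : ∀ w : E, |g w| ≤ ‖w‖ := by
    intro w
    rw [abs_le]
    constructor
    · have h1 := hg_le (-w)
      rw [map_neg, norm_neg] at h1
      linarith
    · exact hg_le w
  set G : E →L[ℝ] ℝ := g.mkContinuous 1 (fun w => by
    rw [Real.norm_eq_abs, one_mul]; exact habs w) with hGdef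
  have hGapp : ∀ w : E, G w = g w := fun w => rfl
  have humem : u ∈ LinearMap.range φ := ⟨((1:ℝ), (0:ℝ)), by rw [hφ]; simp⟩
  have hvmem : v ∈ LinearMap.range φ := ⟨((0:ℝ), (1:ℝ)), by rw [hφ]; simp⟩
  have hGu : G u = ‖u‖ := by
    have h1 := hg_eq ⟨u, humem⟩
    have h2 : e.symm ⟨u, humem⟩ = ((1:ℝ), (0:ℝ)) := by
      rw [LinearEquiv.symm_apply_eq]
      apply Subtype.ext
      rw [hedef, LinearEquiv.ofInjective_apply, hφ]
      simp
    rw [hGapp, h1]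
    show ℓ (e.symm ⟨u, humem⟩) = ‖u‖
    rw [h2, hℓ]
    simp
  have hGv : G v = s := by
    have h1 := hg_eq ⟨v, hvmem⟩
    have h2 : e.symm ⟨v, hvmem⟩ = ((0:ℝ), (1:ℝ)) := by
      rw [LinearEquiv.symm_apply_eq]
      apply Subtype.ext
      rw [hedef, LinearEquiv.ofInjective_apply, hφ]
      simp
    rw [hGapp, h1]
    show ℓ (e.symm ⟨v, hvmem⟩) = s
    rw [h2, hℓ]
    simp
  have hGnorm1 : ‖G‖ ≤ 1 := g.mkContinuous_norm_le zero_le_one _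
  have hGnorm2 : 1 ≤ ‖G‖ := by
    have h1 := G.le_opNorm u
    rw [hGu, Real.norm_eq_abs, abs_of_pos hupos] at h1
    exact le_of_mul_le_mul_right (by linarith) hupos
  have hGnorm : ‖G‖ = 1 := le_antisymm hGnorm1 hGnorm2
  set Ff : E →L[ℝ] ℝ := ‖u‖ • G with hFdef
  have hFnorm : ‖Ff‖ = ‖u‖ := by
    rw [hFdef]
    rw [norm_smul (‖u‖) G, Real.norm_eq_abs, abs_of_pos hupos, hGnorm, mul_one]
  have hFu : Ff u = ‖u‖ ^ 2 := by
    rw [hFdef, ContinuousLinearMap.smul_apply, hGu, smul_eq_mul]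
    ring
  have hjF := hjuniq u hu Ff hFnorm hFu
  have hfinal : (j u) v = ‖u‖ * s := by
    rw [← hjF, hFdef, ContinuousLinearMap.smul_apply, hGv, smul_eq_mul]
  rw [hfinal]
  nlinarith
end aux2

section alg
variable {E : Type*} [NormedAddCommGroup E] [NormedSpace ℝ E]

/-- Variational inequality for the nearest point in a convex set, in a smooth space. -/
lemma nearest_var (j : E → E →L[ℝ] ℝ) (hj0 : j 0 = 0)
    (hjval : ∀ y : E, (j y) y = ‖y‖ ^ 2)
    (hjuniq : ∀ y : E, y ≠ 0 → ∀ f : E →L[ℝ] ℝ, ‖f‖ = ‖y‖ → f y = ‖y‖ ^ 2 → f = j y)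
    (K : Set E) (hcv : Convex ℝ K) (x p : E) (hp : p ∈ K)
    (hmin : ∀ z ∈ K, ‖x - p‖ ≤ ‖x - z‖) (z : E) (hz : z ∈ K) :
    0 ≤ (j (x - p)) (p - z) := by
  have hseg : ∀ t : ℝ, 0 < t → t ≤ 1 → ‖x - p‖ ≤ ‖x - p - t • (z - p)‖ := by
    intro t ht0 ht1
    have hmem : (1 - t) • p + t • z ∈ K := hcv hp hz (by linarith) ht0.le (by ring)
    have hid : x - p - t • (z - p) = x - ((1 - t) • p + t • z) := by module
    rw [hid]
    exact hmin _ hmem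
  have h := smooth_var j hj0 hjval hjuniq (x - p) (z - p) hseg
  have h2 : (j (x - p)) (p - z) = -((j (x - p)) (z - p)) := by
    rw [← map_neg]; congr 1; abel
  rw [h2]; linarith

open scoped Classical in
/-- The nearest point to `x` in `K`, if it exists, else `x`. -/
noncomputable def nearestOr (x : E) (K : Set E) : E :=
  if h : ∃ p ∈ K, ∀ z ∈ K, ‖x - p‖ ≤ ‖x - z‖ then h.choose else x

lemma nearestOr_spec {x : E} {K : Set E}
    (h : ∃ p ∈ K, ∀ z ∈ K, ‖x - p‖ ≤ ‖x - z‖) :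
    nearestOr x K ∈ K ∧ ∀ z ∈ K, ‖x - nearestOr x K‖ ≤ ‖x - z‖ := by
  classical
  rw [nearestOr, dif_pos h]
  exact ⟨h.choose_spec.1, h.choose_spec.2⟩

/-- One step of the iterative algorithm. -/
noncomputable def algStep (j : E → E →L[ℝ] ℝ) (T : E → E) (t : ℕ → ℝ) (x : E) (n : ℕ)
    (p : E × Set E × Set E) : E × Set E × Set E :=
  (nearestOr x
      (closure (convexHull ℝ {z ∈ p.2.1 | ‖z - T^[n] z‖ ≤ t n * ‖p.1 - T^[n] p.1‖}) ∩
        {z ∈ p.2.2 | 0 ≤ (j (x - p.1)) (p.1 - z)}),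
    closure (convexHull ℝ {z ∈ p.2.1 | ‖z - T^[n] z‖ ≤ t n * ‖p.1 - T^[n] p.1‖}),
    {z ∈ p.2.2 | 0 ≤ (j (x - p.1)) (p.1 - z)})

/-- The iterative algorithm. -/
noncomputable def algSeq (j : E → E →L[ℝ] ℝ) (C : Set E) (T : E → E) (t : ℕ → ℝ) (x : E) :
    ℕ → E × Set E × Set E
  | 0 => (x, C, C)
  | n + 1 => algStep j T t x (n + 1) (algSeq j C T t x n)

end alg

/-- **Lemma 3.1 (well-definedness of the algorithm).**
In the Setup (E uniformly convex and smooth, additionally reflexive and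
strictly convex; `C` nonempty bounded closed convex; `T : C → C`
asymptotically nonexpansive with sequence `(kₙ)`; `(tₙ) ⊆ (0,1)`, `tₙ → 0`;
`x ∈ C`), if `F(T) ≠ ∅`, then there are sequences `(xₙ)`, `(Cₙ)`, `(Dₙ)`
satisfying the recursion, and for every `n ≥ 1` the set `Cₙ ∩ Dₙ` is closed,
convex and contains `F(T)`, and the point of `Cₙ ∩ Dₙ` nearest to `x` exists
and is unique (and equals `x_{n+1}`). -/
theorem algorithm_well_defined
    (E : Type*) [NormedAddCommGroup E] [NormedSpace ℝ E] [CompleteSpace E]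
    [UniformConvexSpace E] [StrictConvexSpace ℝ E]
    (hrefl : Function.Surjective (NormedSpace.inclusionInDoubleDual ℝ E))
    -- smoothness: the (unique) duality/norming functional map `j`
    (j : E → E →L[ℝ] ℝ)
    (hj0 : j 0 = 0)
    (hjnorm : ∀ y : E, y ≠ 0 → ‖j y‖ = ‖y‖)
    (hjval : ∀ y : E, (j y) y = ‖y‖ ^ 2)
    (hjuniq : ∀ y : E, y ≠ 0 → ∀ f : E →L[ℝ] ℝ, ‖f‖ = ‖y‖ → f y = ‖y‖ ^ 2 →
      f = j y)
    (C : Set E) (hCne : C.Nonempty) (hCb : Bornology.IsBounded C)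
    (hCcl : IsClosed C) (hCcv : Convex ℝ C)
    (T : E → E) (hTmaps : Set.MapsTo T C C)
    (k : ℕ → ℝ) (hk : ∀ n, 1 ≤ n → 1 ≤ k n)
    (hklim : Filter.Tendsto k Filter.atTop (nhds 1))
    (hTan : ∀ n, 1 ≤ n → ∀ y ∈ C, ∀ z ∈ C, ‖T^[n] y - T^[n] z‖ ≤ k n * ‖y - z‖)
    (t : ℕ → ℝ) (ht : ∀ n, t n ∈ Set.Ioo (0 : ℝ) 1)
    (htlim : Filter.Tendsto t Filter.atTop (nhds 0))
    (x : E) (hx : x ∈ C)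
    (hF : {z ∈ C | T z = z}.Nonempty) :
    ∃ (X : ℕ → E) (Cs Ds : ℕ → Set E),
      X 1 = x ∧ Cs 0 = C ∧ Ds 0 = C ∧
      (∀ n, 1 ≤ n → Cs n = closure (convexHull ℝ
        {z ∈ Cs (n - 1) | ‖z - T^[n] z‖ ≤ t n * ‖X n - T^[n] (X n)‖})) ∧
      (∀ n, 1 ≤ n → Ds n = {z ∈ Ds (n - 1) | 0 ≤ (j (x - X n)) (X n - z)}) ∧
      (∀ n, 1 ≤ n →
        IsClosed (Cs n ∩ Ds n) ∧
        Convex ℝ (Cs n ∩ Ds n) ∧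
        {z ∈ C | T z = z} ⊆ Cs n ∩ Ds n ∧
        X (n + 1) ∈ Cs n ∩ Ds n ∧
        (∀ z ∈ Cs n ∩ Ds n, ‖x - X (n + 1)‖ ≤ ‖x - z‖) ∧
        (∀ y, y ∈ Cs n ∩ Ds n → (∀ z ∈ Cs n ∩ Ds n, ‖x - y‖ ≤ ‖x - z‖) →
          y = X (n + 1))) := by
  classical
  set A := algSeq j C T t x with hA
  -- the key invariant, proved by induction
  have key : ∀ n : ℕ,
      IsClosed ((A n).2.1) ∧ Convex ℝ ((A n).2.1) ∧
      IsClosed ((A n).2.2) ∧ Convex ℝ ((A n).2.2) ∧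
      {z ∈ C | T z = z} ⊆ (A n).2.1 ∩ (A n).2.2 ∧
      (A n).1 ∈ (A n).2.1 ∩ (A n).2.2 ∧
      (∀ z ∈ (A n).2.1 ∩ (A n).2.2, ‖x - (A n).1‖ ≤ ‖x - z‖) := by
    intro n
    induction n with
    | zero =>
      have h0 : A 0 = (x, C, C) := rfl
      rw [h0]
      exact ⟨hCcl, hCcv, hCcl, hCcv, fun z hz => ⟨hz.1, hz.1⟩, ⟨hx, hx⟩,
        fun z _ => by simp⟩
    | succ n ih =>
      obtain ⟨hCc, hCv, hDc, hDv, hFsub, hmem, hminim⟩ := ih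
      set p := A n with hp
      set Cn := closure (convexHull ℝ
        {z ∈ p.2.1 | ‖z - T^[n+1] z‖ ≤ t (n+1) * ‖p.1 - T^[n+1] p.1‖}) with hCn
      set Dn := {z ∈ p.2.2 | 0 ≤ (j (x - p.1)) (p.1 - z)} with hDn
      have hA1 : A (n+1) = (nearestOr x (Cn ∩ Dn), Cn, Dn) := rfl
      have hCnc : IsClosed Cn := isClosed_closure
      have hCnv : Convex ℝ Cn := (convex_convexHull ℝ _).closure
      have hHc : IsClosed {z : E | 0 ≤ (j (x - p.1)) (p.1 - z)} := by
        have hcont : Continuous fun z : E => (j (x - p.1)) (p.1 - z) :=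
          (j (x - p.1)).continuous.comp (continuous_const.sub continuous_id)
        exact isClosed_le continuous_const hcont
      have hHv : Convex ℝ {z : E | 0 ≤ (j (x - p.1)) (p.1 - z)} := by
        intro z₁ hz₁ z₂ hz₂ a b ha hb hab
        have hid : p.1 - (a • z₁ + b • z₂) = a • (p.1 - z₁) + b • (p.1 - z₂) := by
          calc p.1 - (a • z₁ + b • z₂) = (a + b) • p.1 - (a • z₁ + b • z₂) := by
                rw [hab, one_smul]
            _ = a • (p.1 - z₁) + b • (p.1 - z₂) := by module
        show 0 ≤ (j (x - p.1)) (p.1 - (a • z₁ + b • z₂))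
        rw [hid, map_add, map_smul, map_smul, smul_eq_mul, smul_eq_mul]
        exact add_nonneg (mul_nonneg ha hz₁) (mul_nonneg hb hz₂)
      have hDnc : IsClosed Dn := hDc.inter hHc
      have hDnv : Convex ℝ Dn := hDv.inter hHv
      have hFCn : {z ∈ C | T z = z} ⊆ Cn := by
        intro z hz
        have h1 : z ∈ p.2.1 := (hFsub hz).1
        have h2 : T^[n+1] z = z := Function.iterate_fixed hz.2 (n+1)
        refine subset_closure (subset_convexHull ℝ _ ⟨h1, ?_⟩)
        rw [h2, sub_self, norm_zero]
        exact mul_nonneg (ht (n+1)).1.le (norm_nonneg _)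
      have hFDn : {z ∈ C | T z = z} ⊆ Dn := by
        intro z hz
        refine ⟨(hFsub hz).2, ?_⟩
        exact nearest_var j hj0 hjval hjuniq (p.2.1 ∩ p.2.2) (hCv.inter hDv) x p.1
          hmem hminim z (hFsub hz)
      obtain ⟨w, hw⟩ := hF
      have hKne : (Cn ∩ Dn).Nonempty := ⟨w, hFCn hw, hFDn hw⟩
      have hex := exists_nearest_pt (Cn ∩ Dn) hKne (hCnc.inter hDnc) (hCnv.inter hDnv) x
      have hspec := nearestOr_spec hex
      rw [hA1]
      exact ⟨hCnc, hCnv, hDnc, hDnv, fun z hz => ⟨hFCn hz, hFDn hz⟩, hspec.1, hspec.2⟩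
  refine ⟨fun n => (A (n - 1)).1, fun n => (A n).2.1, fun n => (A n).2.2,
    rfl, rfl, rfl, ?_, ?_, ?_⟩
  · intro n hn
    obtain ⟨m, rfl⟩ : ∃ m, n = m + 1 := ⟨n - 1, (Nat.succ_pred_eq_of_pos hn).symm⟩
    simp only [Nat.add_sub_cancel]
    rfl
  · intro n hn
    obtain ⟨m, rfl⟩ : ∃ m, n = m + 1 := ⟨n - 1, (Nat.succ_pred_eq_of_pos hn).symm⟩
    simp only [Nat.add_sub_cancel]
    rfl
  · intro n hn
    obtain ⟨m, rfl⟩ : ∃ m, n = m + 1 := ⟨n - 1, (Nat.succ_pred_eq_of_pos hn).symm⟩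
    obtain ⟨h1, h2, h3, h4, h5, h6, h7⟩ := key (m + 1)
    refine ⟨h1.inter h3, h2.inter h4, h5, ?_, ?_, ?_⟩
    · simp only [Nat.add_sub_cancel]; exact h6
    · intro z hz; simp only [Nat.add_sub_cancel]; exact h7 z hz
    · intro y hy hymin
      simp only [Nat.add_sub_cancel]
      exact nearest_pt_unique ((A (m + 1)).2.1 ∩ (A (m + 1)).2.2) (h2.inter h4) x
        y (A (m + 1)).1 hy h6 hymin h7
end

section
/- In the Setup, assume F(T) = {z ∈ C : Tz = z} is nonempty, let u be the unique point of F(T) nearest to x, and assume the sequence (x_n) generated by the algorithm is well-defined. Then ‖x − x_{n+1}‖ ≤ ‖x − u‖ for all n ≥ 1. -/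
open Filter Topology

lemma var_ineq_aux
    {E : Type*} [NormedAddCommGroup E] [NormedSpace ℝ E]
    (j : E → E →L[ℝ] ℝ)
    (hj0 : j 0 = 0)
    (hjuniq : ∀ y : E, y ≠ 0 → ∀ f : E →L[ℝ] ℝ, ‖f‖ = ‖y‖ → f y = ‖y‖ ^ 2 →
      f = j y)
    (x : E) {K : Set E} (hK : Convex ℝ K) {v : E} (hv : v ∈ K)
    (hmin : ∀ z ∈ K, ‖x - v‖ ≤ ‖x - z‖)
    {z : E} (hz : z ∈ K) :
    0 ≤ (j (x - v)) (v - z) := by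
  by_cases hxv : x - v = 0
  · rw [hxv, hj0]; simp
  set y0 := x - v with hy0
  set w := z - v with hw
  have hy0pos : 0 < ‖y0‖ := norm_pos_iff.mpr hxv
  set t : ℕ → ℝ := fun m => 1 / (m + 1) with hts
  have htpos : ∀ m, 0 < t m := fun m => by positivity
  have htle : ∀ m, t m ≤ 1 := by
    intro m
    rw [hts]
    rw [div_le_one (by positivity)]
    linarith [Nat.cast_nonneg (α := ℝ) m]
  have hmemK : ∀ m, v + t m • w ∈ K := by
    intro m
    have h : (1 - t m) • v + t m • z ∈ K :=
      hK hv hz (sub_nonneg.mpr (htle m)) (htpos m).le (sub_add_cancel 1 (t m))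
    have heq : (1 - t m) • v + t m • z = v + t m • w := by
      rw [hw, smul_sub, sub_smul, one_smul]; abel
    rwa [heq] at h
  have hyineq : ∀ m, ‖y0‖ ≤ ‖y0 - t m • w‖ := by
    intro m
    have h := hmin _ (hmemK m)
    have heq : x - (v + t m • w) = y0 - t m • w := by rw [hy0]; abel
    rwa [heq] at h
  have hyne : ∀ m, y0 - t m • w ≠ 0 := by
    intro m h
    have h2 := hyineq m
    rw [h, norm_zero] at h2
    exact absurd h2 (by push_neg; exact hy0pos)
  choose f hfnorm hfval0 using fun m => exists_dual_vector ℝ (y0 - t m • w) (norm_ne_zero_iff.mpr (hyne m))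
  have hfval : ∀ m, (f m) (y0 - t m • w) = ‖y0 - t m • w‖ := fun m => by
    exact_mod_cast hfval0 m
  have habs : ∀ m (p : E), |f m p| ≤ ‖p‖ := by
    intro m p
    have h := (f m).le_opNorm p
    rw [hfnorm m, one_mul] at h
    exact h
  have hkey : ∀ m, f m y0 = ‖y0 - t m • w‖ + t m * f m w := by
    intro m
    have heq : y0 = (y0 - t m • w) + t m • w := by abel
    calc f m y0 = f m (y0 - t m • w) + f m (t m • w) := by
          conv_lhs => rw [heq]
          rw [map_add]
      _ = ‖y0 - t m • w‖ + t m * f m w := by rw [hfval m, map_smul, smul_eq_mul]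
  have hfy0ub : ∀ m, f m y0 ≤ ‖y0‖ := fun m => (le_abs_self _).trans (habs m y0)
  have hfw : ∀ m, f m w ≤ 0 := by
    intro m
    have h1 := hkey m
    have h2 := hfy0ub m
    have h3 := hyineq m
    nlinarith [htpos m]
  have hfy0lb : ∀ m, ‖y0‖ - t m * ‖w‖ ≤ f m y0 := by
    intro m
    have h1 := hkey m
    have h3 := hyineq m
    have h4 : -‖w‖ ≤ f m w := (abs_le.mp (habs m w)).1
    nlinarith [htpos m]
  have ht0 : Tendsto t atTop (𝓝 0) := tendsto_one_div_add_atTop_nhds_zero_nat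
  have hlow : Tendsto (fun m => ‖y0‖ - t m * ‖w‖) atTop (𝓝 ‖y0‖) := by
    have h : Tendsto (fun m => ‖y0‖ - t m * ‖w‖) atTop (𝓝 (‖y0‖ - 0 * ‖w‖)) :=
      tendsto_const_nhds.sub (ht0.mul tendsto_const_nhds)
    simpa using h
  have hfy0lim : Tendsto (fun m => f m y0) atTop (𝓝 ‖y0‖) :=
    tendsto_of_tendsto_of_tendsto_of_le_of_le hlow tendsto_const_nhds hfy0lb hfy0ub
  set U := Ultrafilter.of (atTop : Filter ℕ) with hUdef
  have hU : (U : Filter ℕ) ≤ atTop := Ultrafilter.of_le _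
  have hexists : ∀ p : E, ∃ c, Tendsto (fun m => f m p) (U : Filter ℕ) (𝓝 c) := by
    intro p
    have hmemI : ∀ m, f m p ∈ Set.Icc (-‖p‖) ‖p‖ := fun m => abs_le.mp (habs m p)
    obtain ⟨c, -, hc⟩ := isCompact_Icc.ultrafilter_le_nhds
      (U.map fun m => f m p)
      (by
        rw [Ultrafilter.coe_map, Filter.le_principal_iff, Filter.mem_map]
        exact Filter.univ_mem' hmemI)
    refine ⟨c, ?_⟩
    rwa [Ultrafilter.coe_map] at hc
  choose F hFl using hexists
  have hFadd : ∀ p q : E, F (p + q) = F p + F q := by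
    intro p q
    refine tendsto_nhds_unique (hFl (p + q)) ?_
    have h := (hFl p).add (hFl q)
    simpa [map_add] using h
  have hFsmul : ∀ (c : ℝ) (p : E), F (c • p) = c * F p := by
    intro c p
    refine tendsto_nhds_unique (hFl (c • p)) ?_
    have h := (hFl p).const_mul c
    simpa [map_smul, smul_eq_mul] using h
  have habsF : ∀ p : E, |F p| ≤ ‖p‖ := by
    intro p
    have hmemI : ∀ m, f m p ∈ Set.Icc (-‖p‖) ‖p‖ := fun m => abs_le.mp (habs m p)
    exact abs_le.mpr (isClosed_Icc.mem_of_tendsto (hFl p) (Filter.Eventually.of_forall hmemI))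
  have hFy0 : F y0 = ‖y0‖ := tendsto_nhds_unique (hFl y0) (hfy0lim.mono_left hU)
  have hFw : F w ≤ 0 := le_of_tendsto' (hFl w) hfw
  let G : E →L[ℝ] ℝ := LinearMap.mkContinuous
    { toFun := F
      map_add' := hFadd
      map_smul' := fun c p => by simpa using hFsmul c p } 1
    (fun p => by rw [one_mul, Real.norm_eq_abs]; exact habsF p)
  let g : E →L[ℝ] ℝ := ‖y0‖ • G
  have hgapp : ∀ p, g p = ‖y0‖ * F p := fun p => rfl
  have hgval : g y0 = ‖y0‖ ^ 2 := by rw [hgapp, hFy0, sq]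
  have hgnorm : ‖g‖ = ‖y0‖ := by
    apply le_antisymm
    · refine g.opNorm_le_bound hy0pos.le (fun p => ?_)
      rw [hgapp, Real.norm_eq_abs, abs_mul, abs_of_nonneg hy0pos.le]
      exact mul_le_mul_of_nonneg_left (habsF p) hy0pos.le
    · have h := g.le_opNorm y0
      have h2 : ‖g y0‖ = ‖y0‖ ^ 2 := by
        rw [hgval, Real.norm_eq_abs, abs_of_nonneg (by positivity)]
      rw [h2] at h
      nlinarith
  have hjy : g = j y0 := hjuniq y0 hxv g hgnorm hgval
  have hvz : v - z = -w := by rw [hw]; abel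
  have hfin : (j y0) (v - z) = ‖y0‖ * (-(F w)) := by
    rw [← hjy, hvz]
    have h : g (-w) = ‖y0‖ * F ((-1 : ℝ) • w) := by rw [neg_one_smul]; exact hgapp _
    rw [h, hFsmul]
    ring
  rw [hfin]
  exact mul_nonneg hy0pos.le (neg_nonneg.mpr hFw)

/-- **(3.1) in the proof of Theorem 3.3.** In the Setup, with `u` the unique
point of `F(T)` nearest to `x`, one has `‖x - x_(n+1)‖ ≤ ‖x - u‖` for all
`n ≥ 1`. -/
theorem dist_le_dist_nearest_fixed_point
    (E : Type*) [NormedAddCommGroup E] [NormedSpace ℝ E] [CompleteSpace E]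
    [UniformConvexSpace E]
    -- smoothness: the (unique) duality/norming functional map `j`
    (j : E → E →L[ℝ] ℝ)
    (hj0 : j 0 = 0)
    (hjnorm : ∀ y : E, y ≠ 0 → ‖j y‖ = ‖y‖)
    (hjval : ∀ y : E, (j y) y = ‖y‖ ^ 2)
    (hjuniq : ∀ y : E, y ≠ 0 → ∀ f : E →L[ℝ] ℝ, ‖f‖ = ‖y‖ → f y = ‖y‖ ^ 2 →
      f = j y)
    (C : Set E) (hCne : C.Nonempty) (hCb : Bornology.IsBounded C)
    (hCcl : IsClosed C) (hCcv : Convex ℝ C)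
    (T : E → E) (hTmaps : Set.MapsTo T C C)
    (k : ℕ → ℝ) (hk : ∀ n, 1 ≤ n → 1 ≤ k n)
    (hklim : Filter.Tendsto k Filter.atTop (nhds 1))
    (hTan : ∀ n, 1 ≤ n → ∀ y ∈ C, ∀ z ∈ C, ‖T^[n] y - T^[n] z‖ ≤ k n * ‖y - z‖)
    (t : ℕ → ℝ) (ht : ∀ n, t n ∈ Set.Ioo (0 : ℝ) 1)
    (htlim : Filter.Tendsto t Filter.atTop (nhds 0))
    (x : E) (hx : x ∈ C)
    (hF : {z ∈ C | T z = z}.Nonempty)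
    -- the (well-defined) sequences generated by the algorithm
    (X : ℕ → E) (Cs Ds : ℕ → Set E)
    (hX1 : X 1 = x) (hCs0 : Cs 0 = C) (hDs0 : Ds 0 = C)
    (hCsrec : ∀ n, 1 ≤ n → Cs n = closure (convexHull ℝ
      {z ∈ Cs (n - 1) | ‖z - T^[n] z‖ ≤ t n * ‖X n - T^[n] (X n)‖}))
    (hDsrec : ∀ n, 1 ≤ n →
      Ds n = {z ∈ Ds (n - 1) | 0 ≤ (j (x - X n)) (X n - z)})
    (hXmem : ∀ n, 1 ≤ n → X (n + 1) ∈ Cs n ∩ Ds n)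
    (hXmin : ∀ n, 1 ≤ n → ∀ z ∈ Cs n ∩ Ds n, ‖x - X (n + 1)‖ ≤ ‖x - z‖)
    -- `u` is the (unique) point of `F(T)` nearest to `x`
    (u : E) (huC : u ∈ C) (huFix : T u = u)
    (hunearest : ∀ z ∈ C, T z = z → ‖x - u‖ ≤ ‖x - z‖) :
    ∀ n, 1 ≤ n → ‖x - X (n + 1)‖ ≤ ‖x - u‖ := by
  have key : ∀ n : ℕ, u ∈ Cs n ∧ u ∈ Ds n ∧ Convex ℝ (Ds n) := by
    intro n
    induction n with
    | zero => exact ⟨hCs0 ▸ huC, hDs0 ▸ huC, hDs0 ▸ hCcv⟩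
    | succ m ih =>
      obtain ⟨ihC, ihD, ihconv⟩ := ih
      have hn1 : 1 ≤ m + 1 := Nat.le_add_left 1 m
      have hpred : m + 1 - 1 = m := rfl
      have hDeq : Ds (m + 1) =
          {z ∈ Ds m | 0 ≤ (j (x - X (m + 1))) (X (m + 1) - z)} := by
        rw [hDsrec (m + 1) hn1, hpred]
      have hCeq := hCsrec (m + 1) hn1
      rw [hpred] at hCeq
      have hufix : T^[m + 1] u = u := Function.iterate_fixed huFix (m + 1)
      have huCs : u ∈ Cs (m + 1) := by
        rw [hCeq]
        refine subset_closure (subset_convexHull ℝ _ ⟨ihC, ?_⟩)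
        rw [hufix, sub_self, norm_zero]
        exact mul_nonneg (ht (m + 1)).1.le (norm_nonneg _)
      have hustep : 0 ≤ (j (x - X (m + 1))) (X (m + 1) - u) := by
        rcases Nat.eq_zero_or_pos m with hm0 | hm1
        · subst hm0
          rw [hX1, sub_self, hj0]
          simp
        · have hCsm : Convex ℝ (Cs m) := by
            rw [hCsrec m hm1]
            exact (convex_convexHull ℝ _).closure
          exact var_ineq_aux j hj0 hjuniq x (hCsm.inter ihconv) (hXmem m hm1)
            (hXmin m hm1) ⟨ihC, ihD⟩
      have hconv : Convex ℝ (Ds (m + 1)) := by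
        rw [hDeq]
        have heq : {z ∈ Ds m | 0 ≤ (j (x - X (m + 1))) (X (m + 1) - z)} =
            Ds m ∩ {z | 0 ≤ (j (x - X (m + 1))) (X (m + 1) - z)} := rfl
        rw [heq]
        refine ihconv.inter (fun p hp q hq a b ha hb hab => ?_)
        simp only [Set.mem_setOf_eq] at hp hq ⊢
        have hexp : X (m + 1) - (a • p + b • q) =
            a • (X (m + 1) - p) + b • (X (m + 1) - q) := by
          calc X (m + 1) - (a • p + b • q)
              = (a + b) • X (m + 1) - (a • p + b • q) := by rw [hab, one_smul]
            _ = a • (X (m + 1) - p) + b • (X (m + 1) - q) := by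
                rw [add_smul, smul_sub, smul_sub]; abel
        rw [hexp, map_add, map_smul, map_smul, smul_eq_mul, smul_eq_mul]
        exact add_nonneg (mul_nonneg ha hp) (mul_nonneg hb hq)
      exact ⟨huCs, hDeq ▸ ⟨ihD, hustep⟩, hconv⟩
  intro n hn
  exact hXmin n hn u ⟨(key n).1, (key n).2.1⟩
end
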